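/- arXiv:1203.6310 — 4 statements merged into one kernel-verified Lean document; each statement's English description precedes it below -/
import Mathlib

section
/- Suppose that ε > 0, that k, r ≥ 2 are integers, and that p = p(n) ≥ n^{-1/k + ε}. Then asymptotically almost surely G_{n,p} has a P_r^k-factor. -/
open Filter

namespace RandomGraphs

/-- The `k`-th power of a graph: two vertices are adjacent iff their distance in `G`
is positive (they are distinct and reachable from each other) and at most `k`. -/
def graphPow {V : Type*} (G : SimpleGraph V) (k : ℕ) : SimpleGraph V where
  Adj u v := u ≠ v ∧ G.Reachable u v ∧ G.dist u v ≤ k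
  symm := by
    constructor
    intro u v h
    exact ⟨h.1.symm, h.2.1.symm, by rw [SimpleGraph.dist_comm]; exact h.2.2⟩
  loopless := by constructor; intro v h; exact h.1 rfl

/-- `H` appears as a (not necessarily induced) subgraph of `G`. -/
def ContainsCopy {V W : Type*} (H : SimpleGraph V) (G : SimpleGraph W) : Prop :=
  ∃ f : V → W, Function.Injective f ∧ ∀ ⦃u v⦄, H.Adj u v → G.Adj (f u) (f v)

/-- All potential edges of a graph on `Fin n`. -/
def edgeCandidates (n : ℕ) : Finset (Sym2 (Fin n)) :=
  Finset.univ.filter (fun e => ¬ e.IsDiag)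

/-- The probability of a given edge set `E` in `G_{n,p}`. -/
noncomputable def edgeSetWeight (n : ℕ) (p : ℝ) (E : Finset (Sym2 (Fin n))) : ℝ :=
  p ^ E.card * (1 - p) ^ ((edgeCandidates n).card - E.card)

open scoped Classical in
/-- The probability that the binomial random graph `G_{n,p}` satisfies the property `P`. -/
noncomputable def prob (n : ℕ) (p : ℝ) (P : SimpleGraph (Fin n) → Prop) : ℝ :=
  ∑ E ∈ (edgeCandidates n).powerset,
    if P (SimpleGraph.fromEdgeSet (↑E)) then edgeSetWeight n p E else 0

end RandomGraphs

open RandomGraphs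


namespace RandomGraphs

/-- `G` (on `Fin n`) has an `H`-factor, where `H` is a graph on `Fin m`: there are
`⌊n/m⌋` pairwise vertex-disjoint copies of `H` in `G`. -/
def HasFactor {m n : ℕ} (H : SimpleGraph (Fin m)) (G : SimpleGraph (Fin n)) : Prop :=
  ∃ f : Fin (n / m) → Fin m → Fin n,
    (∀ i, Function.Injective (f i) ∧ ∀ ⦃u v⦄, H.Adj u v → G.Adj (f i u) (f i v)) ∧
    (∀ i i', i ≠ i' → ∀ u v, f i u ≠ f i' v)

end RandomGraphs


set_option linter.unusedSectionVars false
set_option linter.unusedVariables false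
set_option maxHeartbeats 2000000

namespace RG
open RandomGraphs
variable {α : Type*} [DecidableEq α]

noncomputable def pw (p : ℝ) (A E : Finset α) : ℝ := p ^ E.card * (1-p) ^ (A.card - E.card)

open scoped Classical in
noncomputable def PrW (p : ℝ) (A : Finset α) (Q : Finset α → Prop) : ℝ :=
  ∑ E ∈ A.powerset, if Q E then pw p A E else 0

lemma ite_pr (P : Prop) {inst : Decidable P} (a b : ℝ) :
    (@ite ℝ P (Classical.propDecidable P) a b) = @ite ℝ P inst a b := by
  by_cases h : P <;> simp [h]

lemma PrW_eq (p : ℝ) (A : Finset α) (Q : Finset α → Prop) [DecidablePred Q] :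
    PrW p A Q = ∑ E ∈ A.powerset, if Q E then pw p A E else 0 := by
  rw [PrW]; apply Finset.sum_congr rfl; intro E _; exact ite_pr _ _ _

lemma pw_mul (p : ℝ) {A B EA EB : Finset α} (hAB : Disjoint A B) (hEA : EA ⊆ A) (hEB : EB ⊆ B) :
    pw p (A ∪ B) (EA ∪ EB) = pw p A EA * pw p B EB := by
  have hE : Disjoint EA EB := hAB.mono hEA hEB
  have h1 : EA.card ≤ A.card := Finset.card_le_card hEA
  have h2 : EB.card ≤ B.card := Finset.card_le_card hEB
  rw [pw, pw, pw, Finset.card_union_of_disjoint hE, Finset.card_union_of_disjoint hAB]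
  have h3 : A.card + B.card - (EA.card + EB.card) = (A.card - EA.card) + (B.card - EB.card) := by
    omega
  rw [h3, pow_add, pow_add]
  ring

lemma PrW_slice (p : ℝ) {A S : Finset α} (hA : A ⊆ S) (Q : Finset α → Prop) :
    PrW p S Q = ∑ EA ∈ A.powerset, pw p A EA * PrW p (S \ A) (fun EB => Q (EA ∪ EB)) := by
  classical
  have hsplit : ∀ EA : Finset α, pw p A EA * PrW p (S \ A) (fun EB => Q (EA ∪ EB))
      = ∑ EB ∈ (S \ A).powerset, (if Q (EA ∪ EB) then pw p A EA * pw p (S \ A) EB else 0) := by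
    intro EA
    rw [PrW_eq, Finset.mul_sum]
    apply Finset.sum_congr rfl
    intro EB _
    rw [mul_ite, mul_zero]
  rw [Finset.sum_congr rfl (fun EA _ => hsplit EA), ← Finset.sum_product']
  rw [PrW_eq]
  have hdisj : Disjoint A (S \ A) := Finset.disjoint_sdiff
  apply Finset.sum_nbij' (i := fun E => (E ∩ A, E ∩ (S \ A))) (j := fun q => q.1 ∪ q.2)
  · intro E hE
    rw [Finset.mem_powerset] at hE
    simp only [Finset.mem_product, Finset.mem_powerset]
    exact ⟨Finset.inter_subset_right, Finset.inter_subset_right⟩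
  · intro q hq
    simp only [Finset.mem_product, Finset.mem_powerset] at hq
    rw [Finset.mem_powerset]
    exact Finset.union_subset (hq.1.trans hA) (hq.2.trans (Finset.sdiff_subset))
  · intro E hE
    rw [Finset.mem_powerset] at hE
    rw [← Finset.inter_union_distrib_left, Finset.union_sdiff_of_subset hA,
      Finset.inter_eq_left.mpr hE]
  · intro q hq
    simp only [Finset.mem_product, Finset.mem_powerset] at hq
    have e1 : q.2 ∩ A = ∅ :=
      Finset.disjoint_iff_inter_eq_empty.mp (hdisj.symm.mono_left hq.2)
    have e2 : q.1 ∩ (S \ A) = ∅ :=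
      Finset.disjoint_iff_inter_eq_empty.mp (hdisj.mono_left hq.1)
    rw [Finset.union_inter_distrib_right, Finset.union_inter_distrib_right,
      Finset.inter_eq_left.mpr hq.1, e1, e2, Finset.inter_eq_left.mpr hq.2,
      Finset.union_empty, Finset.empty_union]
  · intro E hE
    rw [Finset.mem_powerset] at hE
    have hu : E ∩ A ∪ E ∩ (S \ A) = E := by
      rw [← Finset.inter_union_distrib_left, Finset.union_sdiff_of_subset hA,
        Finset.inter_eq_left.mpr hE]
    have hw : pw p S E = pw p A (E ∩ A) * pw p (S \ A) (E ∩ (S \ A)) := by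
      conv_lhs => rw [← Finset.union_sdiff_of_subset hA, ← hu]
      exact pw_mul p hdisj Finset.inter_subset_right Finset.inter_subset_right
    simp only [hu, hw]
    try exact ite_pr _ _ _

lemma pw_nonneg' {p : ℝ} (hp : 0 ≤ p) (hp1 : p ≤ 1) (A E : Finset α) : 0 ≤ pw p A E :=
  mul_nonneg (pow_nonneg hp _) (pow_nonneg (by linarith) _)

lemma sum_pw' (p : ℝ) (A : Finset α) : ∑ E ∈ A.powerset, pw p A E = 1 := by
  have h := Finset.prod_add (fun _ : α => p) (fun _ : α => (1-p)) A
  simp only [add_sub_cancel, Finset.prod_const, one_pow] at h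
  have h2 : ∑ E ∈ A.powerset, pw p A E
      = ∑ E ∈ A.powerset, p ^ E.card * (1-p) ^ (A \ E).card := by
    apply Finset.sum_congr rfl
    intro E hE
    rw [Finset.mem_powerset] at hE
    simp [pw, Finset.card_sdiff_of_subset hE]
  rw [h2, ← h]

lemma PrW_cond_le {p : ℝ} (hp : 0 ≤ p) (hp1 : p ≤ 1) {A S : Finset α} (hA : A ⊆ S)
    {Q : Finset α → Prop} {δ : ℝ}
    (h : ∀ EA ∈ A.powerset, PrW p (S \ A) (fun EB => Q (EA ∪ EB)) ≤ δ) (hδ : 0 ≤ δ) :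
    PrW p S Q ≤ δ := by
  rw [PrW_slice p hA]
  calc ∑ EA ∈ A.powerset, pw p A EA * PrW p (S \ A) (fun EB => Q (EA ∪ EB))
      ≤ ∑ EA ∈ A.powerset, pw p A EA * δ := by
        apply Finset.sum_le_sum
        intro EA hEA
        exact mul_le_mul_of_nonneg_left (h EA hEA) (pw_nonneg' hp hp1 _ _)
    _ = δ := by rw [← Finset.sum_mul, sum_pw', one_mul]


lemma PrW_le_one' {p : ℝ} (hp : 0 ≤ p) (hp1 : p ≤ 1) (A : Finset α) (Q : Finset α → Prop) :
    PrW p A Q ≤ 1 := by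
  classical
  rw [← sum_pw' p A, PrW_eq]
  apply Finset.sum_le_sum
  intro E hE
  split
  · exact le_rfl
  · exact pw_nonneg' hp hp1 A E

lemma PrW_mono' {p : ℝ} (hp : 0 ≤ p) (hp1 : p ≤ 1) (A : Finset α) {Q Q' : Finset α → Prop}
    (h : ∀ E, E ⊆ A → Q E → Q' E) : PrW p A Q ≤ PrW p A Q' := by
  classical
  rw [PrW_eq, PrW_eq]
  apply Finset.sum_le_sum
  intro E hE
  rw [Finset.mem_powerset] at hE
  by_cases hq : Q E
  · rw [if_pos hq, if_pos (h E hE hq)]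
  · rw [if_neg hq]
    split
    · exact pw_nonneg' hp hp1 A E
    · exact le_rfl

lemma PrW_false' (p : ℝ) (A : Finset α) (Q : Finset α → Prop) (h : ∀ E, E ⊆ A → ¬ Q E) :
    PrW p A Q = 0 := by
  classical
  rw [PrW_eq]
  apply Finset.sum_eq_zero
  intro E hE
  rw [Finset.mem_powerset] at hE
  rw [if_neg (h E hE)]

lemma one_sub_pow_nonneg {p : ℝ} (hp : 0 ≤ p) (hp1 : p ≤ 1) (c : ℕ) : 0 ≤ 1 - p ^ c := by
  have := pow_le_one₀ hp hp1 (n := c)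
  linarith

/-- Probability that none of a family of pairwise disjoint edge-blocks is fully present. -/
lemma PrW_blocks {ι : Type*} [DecidableEq ι] {p : ℝ} (hp : 0 ≤ p) (hp1 : p ≤ 1)
    (t : Finset ι) :
    ∀ (S : Finset α) (D : ι → Finset α), (∀ i ∈ t, D i ⊆ S) →
    (∀ i ∈ t, ∀ j ∈ t, i ≠ j → Disjoint (D i) (D j)) →
    PrW p S (fun E => ∀ i ∈ t, ¬ D i ⊆ E) ≤ ∏ i ∈ t, (1 - p ^ (D i).card) := by
  classical
  induction t using Finset.induction_on with
  | empty =>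
    intro S D _ _
    simpa using PrW_le_one' hp hp1 S _
  | @insert a t ha ih =>
    intro S D hDS hdisj
    have hA : D a ⊆ S := hDS a (Finset.mem_insert_self a t)
    rw [PrW_slice p hA]
    have hle : ∀ EA ∈ (D a).powerset,
        pw p (D a) EA * PrW p (S \ D a) (fun EB => ∀ i ∈ insert a t, ¬ D i ⊆ EA ∪ EB)
        ≤ pw p (D a) EA * (if EA = D a then 0 else ∏ i ∈ t, (1 - p ^ (D i).card)) := by
      intro EA hEA
      rw [Finset.mem_powerset] at hEA
      apply mul_le_mul_of_nonneg_left _ (pw_nonneg' hp hp1 _ _)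
      by_cases hcase : EA = D a
      · rw [if_pos hcase]
        have : PrW p (S \ D a) (fun EB => ∀ i ∈ insert a t, ¬ D i ⊆ EA ∪ EB) = 0 := by
          apply PrW_false'
          intro EB _ hcon
          exact hcon a (Finset.mem_insert_self a t) (hcase ▸ Finset.subset_union_left)
        rw [this]
      · rw [if_neg hcase]
        calc PrW p (S \ D a) (fun EB => ∀ i ∈ insert a t, ¬ D i ⊆ EA ∪ EB)
            ≤ PrW p (S \ D a) (fun EB => ∀ i ∈ t, ¬ D i ⊆ EB) := by
              apply PrW_mono' hp hp1
              intro EB _ hall i hi hcon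
              exact hall i (Finset.mem_insert_of_mem hi) (hcon.trans Finset.subset_union_right)
          _ ≤ ∏ i ∈ t, (1 - p ^ (D i).card) := by
              apply ih (S \ D a) D
              · intro i hi
                rw [Finset.subset_sdiff]
                refine ⟨hDS i (Finset.mem_insert_of_mem hi), ?_⟩
                exact hdisj i (Finset.mem_insert_of_mem hi) a (Finset.mem_insert_self a t)
                  (fun h => ha (h ▸ hi))
              · intro i hi j hj hij
                exact hdisj i (Finset.mem_insert_of_mem hi) j (Finset.mem_insert_of_mem hj) hij
    calc ∑ EA ∈ (D a).powerset,
          pw p (D a) EA * PrW p (S \ D a) (fun EB => ∀ i ∈ insert a t, ¬ D i ⊆ EA ∪ EB)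
        ≤ ∑ EA ∈ (D a).powerset,
          pw p (D a) EA * (if EA = D a then 0 else ∏ i ∈ t, (1 - p ^ (D i).card)) :=
          Finset.sum_le_sum hle
      _ = ∑ EA ∈ (D a).powerset \ {D a},
          pw p (D a) EA * ∏ i ∈ t, (1 - p ^ (D i).card) := by
          rw [← Finset.sum_subset (Finset.sdiff_subset)]
          · apply Finset.sum_congr rfl
            intro EA hEA
            rw [Finset.mem_sdiff, Finset.mem_singleton] at hEA
            rw [if_neg hEA.2]
          · intro EA hEA hnm
            rw [Finset.mem_sdiff, Finset.mem_singleton] at hnm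
            push_neg at hnm
            rw [hnm hEA, if_pos rfl, mul_zero]
      _ = (1 - p ^ (D a).card) * ∏ i ∈ t, (1 - p ^ (D i).card) := by
          rw [← Finset.sum_mul]
          congr 1
          have hsum := sum_pw' p (D a)
          have hmem : D a ∈ (D a).powerset := Finset.mem_powerset_self _
          have hsub : ({D a} : Finset (Finset α)) ⊆ (D a).powerset :=
            Finset.singleton_subset_iff.mpr hmem
          rw [Finset.sum_sdiff_eq_sub hsub, hsum, Finset.sum_singleton]
          simp [pw]
      _ = ∏ i ∈ insert a t, (1 - p ^ (D i).card) := by rw [Finset.prod_insert ha]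


lemma pathGraph_walk_bound {r : ℕ} {u v : Fin r} (w : (SimpleGraph.pathGraph r).Walk u v) :
    v.val ≤ u.val + w.length ∧ u.val ≤ v.val + w.length := by
  induction w with
  | nil => simp
  | cons h q ih =>
    rw [SimpleGraph.pathGraph_adj] at h
    rw [SimpleGraph.Walk.length_cons]
    omega

lemma pow_path_adj {r k : ℕ} {u v : Fin r}
    (h : (graphPow (SimpleGraph.pathGraph r) k).Adj u v) :
    u ≠ v ∧ u.val ≤ v.val + k ∧ v.val ≤ u.val + k := by
  obtain ⟨hne, hreach, hdist⟩ := h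
  obtain ⟨w, hw⟩ := hreach.exists_walk_length_eq_dist
  have := pathGraph_walk_bound w
  rw [hw] at this
  exact ⟨hne, by omega, by omega⟩

/-- the canonical embedding of column/row coordinates. -/
def idx {n r N : ℕ} (h : r * N ≤ n) (c : Fin r) (j : Fin N) : Fin n :=
  ⟨c.val * N + j.val, by
    calc c.val * N + j.val < (c.val + 1) * N := by
          have := j.isLt; rw [Nat.succ_mul]; omega
      _ ≤ r * N := Nat.mul_le_mul_right N c.isLt
      _ ≤ n := h⟩

lemma idx_div {n r N : ℕ} (h : r * N ≤ n) (hN : 0 < N) (c : Fin r) (j : Fin N) :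
    ((idx h c j : Fin n) : ℕ) / N = c.val := by
  show (c.val * N + j.val) / N = c.val
  rw [add_comm, Nat.add_mul_div_right _ _ hN, Nat.div_eq_of_lt j.isLt, zero_add]

lemma idx_inj {n r N : ℕ} (h : r * N ≤ n) (hN : 0 < N) {c c' : Fin r} {j j' : Fin N}
    (he : (idx h c j : Fin n) = idx h c' j') : c = c' ∧ j = j' := by
  have h1 : c.val * N + j.val = c'.val * N + j'.val := by
    have := congrArg (fun x : Fin n => x.val) he
    exact this
  have hc : c.val = c'.val := by
    have e1 := idx_div h hN c j
    have e2 := idx_div h hN c' j'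
    rw [show ((idx h c j : Fin n) : ℕ) = c.val * N + j.val from rfl, h1] at e1
    rw [show ((idx h c' j' : Fin n) : ℕ) = c'.val * N + j'.val from rfl] at e2
    rw [e1] at e2
    omega
  constructor
  · exact Fin.ext hc
  · apply Fin.ext
    rw [hc] at h1
    omega


lemma PrW_union_bound {α : Type*} [DecidableEq α] {ι : Type*} {p : ℝ} (hp : 0 ≤ p)
    (hp1 : p ≤ 1) (A : Finset α) (s : Finset ι) (Q : ι → Finset α → Prop) :
    PrW p A (fun E => ∃ i ∈ s, Q i E) ≤ ∑ i ∈ s, PrW p A (Q i) := by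
  classical
  have h2 : ∀ E ∈ A.powerset, (if (∃ i ∈ s, Q i E) then pw p A E else 0)
      ≤ ∑ i ∈ s, (if Q i E then pw p A E else 0) := by
    intro E _
    by_cases hq : ∃ i ∈ s, Q i E
    · obtain ⟨i₀, hi₀, hQ⟩ := hq
      rw [if_pos ⟨i₀, hi₀, hQ⟩]
      calc pw p A E = (if Q i₀ E then pw p A E else 0) := by rw [if_pos hQ]
        _ ≤ ∑ i ∈ s, (if Q i E then pw p A E else 0) := by
            apply Finset.single_le_sum _ hi₀
            intro i _
            split
            · exact pw_nonneg' hp hp1 A E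
            · exact le_rfl
    · rw [if_neg hq]
      apply Finset.sum_nonneg
      intro i _
      split
      · exact pw_nonneg' hp hp1 A E
      · exact le_rfl
  calc PrW p A (fun E => ∃ i ∈ s, Q i E)
      = ∑ E ∈ A.powerset, (if (∃ i ∈ s, Q i E) then pw p A E else 0) := PrW_eq p A _
    _ ≤ ∑ E ∈ A.powerset, ∑ i ∈ s, (if Q i E then pw p A E else 0) :=
        Finset.sum_le_sum h2
    _ = ∑ i ∈ s, PrW p A (Q i) := by
        rw [Finset.sum_comm]
        apply Finset.sum_congr rfl
        intro i _
        exact (PrW_eq p A _).symm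

open RandomGraphs in
lemma mem_edgeCandidates {n : ℕ} {e : Sym2 (Fin n)} :
    e ∈ edgeCandidates n ↔ ¬ e.IsDiag := by
  simp [edgeCandidates]

/-- The partial-factor condition: the first `i` columns are filled consistently. -/
def Cond {n r N : ℕ} (h : r * N ≤ n) (k : ℕ) (E : Finset (Sym2 (Fin n))) (i : ℕ)
    (σ : Fin r → Fin N → Fin N) : Prop :=
  (∀ c : Fin r, Function.Injective (σ c)) ∧
  (∀ j : Fin N, ∀ c c' : Fin r, c'.val < c.val → c.val < i → c.val ≤ c'.val + k →
    s(idx h c (σ c j), idx h c' (σ c' j)) ∈ E)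

def GoodI {n r N : ℕ} (h : r * N ≤ n) (k : ℕ) (E : Finset (Sym2 (Fin n))) (i : ℕ) : Prop :=
  ∃ σ, Cond h k E i σ

lemma goodI_one {n r N : ℕ} (h : r * N ≤ n) (k : ℕ) (E : Finset (Sym2 (Fin n))) :
    GoodI h k E 1 := by
  refine ⟨fun _ => id, fun c => Function.injective_id, ?_⟩
  intro j c c' hcc hci hck
  omega

lemma cond_edge_mem {n r N : ℕ} (h : r * N ≤ n) (hN : 0 < N) {c c' : Fin r}
    (hcc : c'.val < c.val) (x y : Fin N) :
    s((idx h c x : Fin n), idx h c' y) ∈ edgeCandidates n := by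
  rw [mem_edgeCandidates, Sym2.mk_isDiag_iff]
  intro heq
  have := (idx_inj h hN heq).1
  rw [this] at hcc
  omega

/-- The crucial step estimate: the probability that the construction can reach level `i`
but not level `i+1`. -/
lemma step_bound {n r k N : ℕ} (h : r * N ≤ n) (hN : 0 < N) (hk : 1 ≤ k)
    {p : ℝ} (hp : 0 ≤ p) (hp1 : p ≤ 1) {i : ℕ} (hi1 : 1 ≤ i) (hir : i < r)
    (hγ1 : (N:ℝ)^2 * Real.exp (-(p^k * N)/2) ≤ 1) :
    PrW p (edgeCandidates n) (fun E => GoodI h k E i ∧ ¬ GoodI h k E (i+1))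
      ≤ N * ((N:ℝ)^2 * Real.exp (-(p^k * N)/2)) := by
  classical
  set γ : ℝ := (N:ℝ)^2 * Real.exp (-(p^k * N)/2) with hγdef
  have hγ0 : 0 ≤ γ := by positivity
  set A : Finset (Sym2 (Fin n)) :=
    (edgeCandidates n).filter (fun e => ∀ x ∈ e, x.val / N < i) with hAdef
  have hAsub : A ⊆ edgeCandidates n := Finset.filter_subset _ _
  have hNγ0 : (0:ℝ) ≤ N * γ := by positivity
  apply PrW_cond_le hp hp1 hAsub _ hNγ0
  intro EA hEA
  rw [Finset.mem_powerset] at hEA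
  by_cases hGood : GoodI h k EA i
  swap
  · -- `Good i` fails for the revealed part: the event is impossible.
    have hzero : PrW p (edgeCandidates n \ A)
        (fun EB => GoodI h k (EA ∪ EB) i ∧ ¬GoodI h k (EA ∪ EB) (i+1)) = 0 := by
      apply PrW_false'
      rintro EB hEB ⟨⟨σ, hσ⟩, -⟩
      apply hGood
      refine ⟨σ, hσ.1, ?_⟩
      intro j c c' hcc hci hck
      have hmem := hσ.2 j c c' hcc hci hck
      have hedge_in_A : s(idx h c (σ c j), idx h c' (σ c' j)) ∈ A := by
        rw [hAdef, Finset.mem_filter]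
        refine ⟨cond_edge_mem h hN hcc _ _, ?_⟩
        intro x hx
        rw [Sym2.mem_iff] at hx
        rcases hx with rfl | rfl
        · rw [idx_div h hN]; omega
        · rw [idx_div h hN]; omega
      rcases Finset.mem_union.mp hmem with hEA' | hEB'
      · exact hEA'
      · exfalso
        have := hEB hEB'
        rw [Finset.mem_sdiff] at this
        exact this.2 hedge_in_A
    rw [hzero]
    exact hNγ0
  · obtain ⟨σ, hσinj, hσadj⟩ := hGood
    set ci : Fin r := ⟨i, hir⟩ with hcidef
    set relevant : Finset (Fin r) :=
      Finset.univ.filter (fun c' => c'.val < i ∧ i ≤ c'.val + k) with hreldef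
    have hrel_lt : ∀ c' ∈ relevant, c'.val < i := by
      intro c' hc'
      rw [hreldef, Finset.mem_filter] at hc'
      exact hc'.2.1
    have hrel_card : relevant.card ≤ k := by
      calc relevant.card ≤ (Finset.range k).card := by
            apply Finset.card_le_card_of_injOn (fun c' => c'.val + k - i)
            · intro c' hc'
              simp only [hreldef, Finset.mem_coe, Finset.mem_filter, Finset.mem_univ, true_and] at hc'
              simp only [Finset.mem_coe, Finset.mem_range]
              omega
            · intro a ha b hb hab
              simp only [hreldef, Finset.mem_coe, Finset.mem_filter] at ha hb
              have hab' : a.val + k - i = b.val + k - i := hab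
              apply Fin.ext
              omega
        _ = k := Finset.card_range k
    -- the blocks of candidate edges
    set D : Fin N × Fin N → Finset (Sym2 (Fin n)) := fun q =>
      relevant.image (fun c' => s((idx h ci q.2 : Fin n), idx h c' (σ c' q.1))) with hDdef
    have hD_card : ∀ q, (D q).card = relevant.card := by
      intro q
      rw [hDdef]
      apply Finset.card_image_of_injOn
      intro a ha b hb hab
      rw [Sym2.eq_iff] at hab
      rcases hab with ⟨h1, h2⟩ | ⟨h1, h2⟩
      · exact ((idx_inj h hN h2).1)
      · exfalso
        have := (idx_inj h hN h1).1
        have ha' := hrel_lt b hb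
        rw [hcidef] at this
        rw [← this] at ha'
        simp at ha'
    have hD_sub : ∀ q : Fin N × Fin N, D q ⊆ edgeCandidates n \ A := by
      intro q e he
      rw [hDdef] at he
      simp only [Finset.mem_image] at he
      obtain ⟨c', hc', rfl⟩ := he
      have hlt : c'.val < ci.val := hrel_lt c' hc'
      rw [Finset.mem_sdiff]
      constructor
      · exact cond_edge_mem h hN hlt _ _
      · rw [hAdef, Finset.mem_filter]
        push_neg
        intro _
        refine ⟨idx h ci q.2, ?_, ?_⟩
        · rw [Sym2.mem_iff]; left; rfl
        · rw [idx_div h hN]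
    have hD_disj : ∀ q q' : Fin N × Fin N, q ≠ q' → Disjoint (D q) (D q') := by
      intro q q' hqq
      rw [Finset.disjoint_left]
      intro e he he'
      rw [hDdef] at he he'
      simp only [Finset.mem_image] at he he'
      obtain ⟨c1, hc1, he1⟩ := he
      obtain ⟨c2, hc2, he2⟩ := he'
      rw [← he2] at he1
      rw [Sym2.eq_iff] at he1
      apply hqq
      rcases he1 with ⟨h1, h2⟩ | ⟨h1, h2⟩
      · have hy : q.2 = q'.2 := (idx_inj h hN h1).2
        have hc : c1 = c2 := (idx_inj h hN h2).1
        rw [hc] at h2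
        have hj : q.1 = q'.1 := hσinj c2 (idx_inj h hN h2).2
        exact Prod.ext hj hy
      · exfalso
        have h1' := (idx_inj h hN h1).1
        have := hrel_lt c2 hc2
        rw [← h1'] at this
        simp [hcidef] at this
    -- the Hall-type union bound for a fixed pair (S, T)
    have hBadST : ∀ sc ∈ Finset.Icc 1 N,
        ∀ q ∈ (Finset.powersetCard sc (Finset.univ : Finset (Fin N))) ×ˢ
          (Finset.powersetCard (sc-1) (Finset.univ : Finset (Fin N))),
        PrW p (edgeCandidates n \ A)
          (fun EB => ∀ x ∈ q.1 ×ˢ ((Finset.univ : Finset (Fin N)) \ q.2), ¬ D x ⊆ EB)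
          ≤ (1 - p^k) ^ (sc * (N - sc + 1)) := by
      intro sc hsc q hq
      rw [Finset.mem_Icc] at hsc
      rw [Finset.mem_product, Finset.mem_powersetCard, Finset.mem_powersetCard] at hq
      calc PrW p (edgeCandidates n \ A)
            (fun EB => ∀ x ∈ q.1 ×ˢ ((Finset.univ : Finset (Fin N)) \ q.2), ¬ D x ⊆ EB)
          ≤ ∏ x ∈ q.1 ×ˢ ((Finset.univ : Finset (Fin N)) \ q.2), (1 - p ^ (D x).card) := by
            apply PrW_blocks hp hp1
            · intro x hx; exact hD_sub x
            · intro x hx y hy hxy; exact hD_disj x y hxy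
        _ ≤ ∏ x ∈ q.1 ×ˢ ((Finset.univ : Finset (Fin N)) \ q.2), (1 - p ^ k) := by
            apply Finset.prod_le_prod
            · intro x hx
              exact one_sub_pow_nonneg hp hp1 _
            · intro x hx
              have : p ^ k ≤ p ^ (D x).card := by
                apply pow_le_pow_of_le_one hp hp1
                rw [hD_card]; exact hrel_card
              linarith
        _ = (1 - p^k) ^ (sc * (N - sc + 1)) := by
            rw [Finset.prod_const, Finset.card_product, Finset.card_sdiff_of_subset (Finset.subset_univ _)]
            congr 1
            rw [hq.1.2, hq.2.2]
            simp only [Finset.card_univ, Fintype.card_fin]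
            have hscN : sc ≤ N := hsc.2
            have h1sc : 1 ≤ sc := hsc.1
            have he : N - (sc - 1) = N - sc + 1 := by omega
            rw [he]
    -- the numeric bound for one value of `sc`
    have hterm : ∀ sc, 1 ≤ sc → sc ≤ N →
        ((N.choose sc : ℝ) * (N.choose (sc-1) : ℝ)) * (1 - p^k) ^ (sc * (N - sc + 1)) ≤ γ := by
      intro sc h1 h2
      set t : ℕ := min sc (N - sc + 1) with htdef
      have ht1 : 1 ≤ t := by omega
      have hN1 : 1 ≤ N := hN
      have hchoose : ((N.choose sc : ℝ) * (N.choose (sc-1) : ℝ)) ≤ ((N:ℝ)^2)^t := by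
        have hc1 : (N.choose sc : ℝ) ≤ (N:ℝ)^t := by
          rcases le_or_gt sc (N - sc + 1) with hca | hca
          · have : t = sc := by omega
            rw [this]
            exact_mod_cast Nat.cast_le.mpr (Nat.choose_le_pow N sc)
          · have hts : t = N - sc + 1 := by omega
            have hsym : N.choose sc = N.choose (N - sc) := (Nat.choose_symm h2).symm
            rw [hsym, hts]
            have := Nat.choose_le_pow N (N - sc)
            calc (N.choose (N-sc) : ℝ) ≤ ((N:ℝ))^(N-sc) := by exact_mod_cast this
              _ ≤ ((N:ℝ))^(N-sc+1) := by
                  apply pow_le_pow_right₀ (by exact_mod_cast hN1)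
                  omega
        have hc2 : (N.choose (sc-1) : ℝ) ≤ (N:ℝ)^t := by
          rcases le_or_gt sc (N - sc + 1) with hca | hca
          · have hts : t = sc := by omega
            rw [hts]
            calc (N.choose (sc-1) : ℝ) ≤ ((N:ℝ))^(sc-1) := by
                  exact_mod_cast Nat.cast_le.mpr (Nat.choose_le_pow N (sc-1))
              _ ≤ ((N:ℝ))^sc := by
                  apply pow_le_pow_right₀ (by exact_mod_cast hN1)
                  omega
          · have hts : t = N - sc + 1 := by omega
            have hsc1N : sc - 1 ≤ N := by omega
            have hsym : N.choose (sc-1) = N.choose (N - (sc-1)) := (Nat.choose_symm hsc1N).symm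
            rw [hsym, hts]
            have hNsc : N - (sc - 1) = N - sc + 1 := by omega
            rw [hNsc]
            exact_mod_cast Nat.cast_le.mpr (Nat.choose_le_pow N (N - sc + 1))
        calc (N.choose sc : ℝ) * (N.choose (sc-1) : ℝ) ≤ (N:ℝ)^t * (N:ℝ)^t := by
              apply mul_le_mul hc1 hc2 (by positivity) (by positivity)
          _ = ((N:ℝ)^2)^t := by ring
      have hx : (1 - p^k) ^ (sc * (N - sc + 1)) ≤ (Real.exp (-(p^k * N)/2))^t := by
        have hpk0 : 0 ≤ p ^ k := pow_nonneg hp k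
        have hexp1 : (1 - p^k) ≤ Real.exp (-(p^k)) := by
          have := Real.add_one_le_exp (-(p^k))
          linarith
        calc (1 - p^k) ^ (sc * (N - sc + 1))
            ≤ (Real.exp (-(p^k))) ^ (sc * (N - sc + 1)) := by
              apply pow_le_pow_left₀ (one_sub_pow_nonneg hp hp1 k) hexp1
          _ = Real.exp (-(p^k) * ((sc * (N - sc + 1) : ℕ) : ℝ)) := by
              rw [← Real.exp_nat_mul]
              congr 1
              ring
          _ ≤ Real.exp ((-(p^k * N)/2) * t) := by
              apply Real.exp_le_exp.mpr
              have hnat : N * t ≤ 2 * (sc * (N - sc + 1)) := by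
                rcases le_or_gt sc (N - sc + 1) with hca | hca
                · have : t = sc := by omega
                  rw [this]
                  have h3 : N ≤ 2 * (N - sc + 1) := by omega
                  calc N * sc ≤ (2 * (N - sc + 1)) * sc := Nat.mul_le_mul_right sc h3
                    _ = 2 * (sc * (N - sc + 1)) := by ring
                · have hts : t = N - sc + 1 := by omega
                  rw [hts]
                  have h3 : N ≤ 2 * sc := by omega
                  calc N * (N - sc + 1) ≤ (2 * sc) * (N - sc + 1) :=
                      Nat.mul_le_mul_right _ h3
                    _ = 2 * (sc * (N - sc + 1)) := by ring
              have hnat' : (N:ℝ) * (t:ℝ) ≤ 2 * ((sc * (N - sc + 1) : ℕ) : ℝ) := by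
                exact_mod_cast hnat
              nlinarith [hpk0, hnat']
          _ = (Real.exp (-(p^k * N)/2))^t := by
              rw [← Real.exp_nat_mul]
              congr 1
              ring
      calc ((N.choose sc : ℝ) * (N.choose (sc-1) : ℝ)) * (1 - p^k) ^ (sc * (N - sc + 1))
          ≤ ((N:ℝ)^2)^t * (Real.exp (-(p^k * N)/2))^t := by
            apply mul_le_mul hchoose hx
              (pow_nonneg (one_sub_pow_nonneg hp hp1 k) _) (by positivity)
        _ = γ ^ t := by rw [hγdef, mul_pow]
        _ ≤ γ ^ 1 := pow_le_pow_of_le_one hγ0 hγ1 ht1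
        _ = γ := pow_one γ
    -- the event implies a Hall-type failure for some (sc, S, T)
    have himp : ∀ EB, EB ⊆ edgeCandidates n \ A →
        (GoodI h k (EA ∪ EB) i ∧ ¬ GoodI h k (EA ∪ EB) (i+1)) →
        ∃ sc ∈ Finset.Icc 1 N,
          ∃ q ∈ (Finset.powersetCard sc (Finset.univ : Finset (Fin N))) ×ˢ
            (Finset.powersetCard (sc-1) (Finset.univ : Finset (Fin N))),
          ∀ x ∈ q.1 ×ˢ ((Finset.univ : Finset (Fin N)) \ q.2), ¬ D x ⊆ EB := by
      rintro EB hEB ⟨-, hbad⟩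
      set tf : Fin N → Finset (Fin N) := fun j =>
        Finset.univ.filter (fun y => ∀ c' ∈ relevant,
          s((idx h ci y : Fin n), idx h c' (σ c' j)) ∈ EB) with htf
      have hhall : ¬ ∀ s : Finset (Fin N), s.card ≤ (s.biUnion tf).card := by
        intro hh
        obtain ⟨m, hminj, hmmem⟩ :=
          (Finset.all_card_le_biUnion_card_iff_exists_injective tf).mp hh
        apply hbad
        refine ⟨Function.update σ ci m, ?_, ?_⟩
        · intro c
          rcases eq_or_ne c ci with rfl | hc
          · rw [Function.update_self]; exact hminj
          · rw [Function.update_of_ne hc]; exact hσinj c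
        · intro j c c' hcc hci1 hck
          rcases Nat.lt_or_ge c.val i with hlo | hhi
          · have hcne : c ≠ ci := by
              intro e; rw [e] at hlo; simp only [hcidef] at hlo; omega
            have hcne' : c' ≠ ci := by
              intro e
              rw [e] at hcc
              simp only [hcidef] at hcc
              omega
            rw [Function.update_of_ne hcne, Function.update_of_ne hcne']
            exact Finset.mem_union_left _ (hσadj j c c' hcc hlo hck)
          · have hceq : c = ci := by
              apply Fin.ext
              simp only [hcidef]
              omega
            subst hceq
            have hc'lt : c'.val < i := by
              have := hcc
              simp only [hcidef] at this ⊢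
              omega
            have hc'ne : c' ≠ ci := by
              intro e
              rw [e] at hc'lt
              simp only [hcidef] at hc'lt
              omega
            rw [Function.update_self, Function.update_of_ne hc'ne]
            have hc'rel : c' ∈ relevant := by
              rw [hreldef, Finset.mem_filter]
              refine ⟨Finset.mem_univ _, hc'lt, ?_⟩
              simp only [hcidef] at hck
              omega
            have hm := hmmem j
            rw [htf, Finset.mem_filter] at hm
            exact Finset.mem_union_right _ (hm.2 c' hc'rel)
      push_neg at hhall
      obtain ⟨s, hs⟩ := hhall
      have hs1 : 1 ≤ s.card := by omega
      have hsN : s.card ≤ N := le_trans (Finset.card_le_univ s) (by simp)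
      have hbiu : (s.biUnion tf).card ≤ s.card - 1 := by omega
      obtain ⟨T, hsubT, hTuniv, hTcard⟩ := Finset.exists_subsuperset_card_eq
        (Finset.subset_univ (s.biUnion tf)) hbiu (by simp; omega)
      refine ⟨s.card, Finset.mem_Icc.mpr ⟨hs1, hsN⟩, (s, T), ?_, ?_⟩
      · rw [Finset.mem_product]
        exact ⟨Finset.mem_powersetCard.mpr ⟨Finset.subset_univ s, rfl⟩,
          Finset.mem_powersetCard.mpr ⟨Finset.subset_univ T, hTcard⟩⟩
      · intro x hx hDx
        rw [Finset.mem_product] at hx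
        have hx2 := hx.2
        rw [Finset.mem_sdiff] at hx2
        have hynotin : x.2 ∉ tf x.1 := by
          intro hy
          exact hx2.2 (hsubT (Finset.mem_biUnion.mpr ⟨x.1, hx.1, hy⟩))
        apply hynotin
        rw [htf, Finset.mem_filter]
        refine ⟨Finset.mem_univ _, ?_⟩
        intro c' hc'
        apply hDx
        rw [hDdef]
        exact Finset.mem_image_of_mem _ hc'
    -- chain of union bounds
    have hpairs_card : ∀ sc, ((Finset.powersetCard sc (Finset.univ : Finset (Fin N))) ×ˢ
        (Finset.powersetCard (sc-1) (Finset.univ : Finset (Fin N)))).card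
        = N.choose sc * N.choose (sc-1) := by
      intro sc
      rw [Finset.card_product, Finset.card_powersetCard, Finset.card_powersetCard]
      simp
    calc (PrW p (edgeCandidates n \ A)
          (fun EB => GoodI h k (EA ∪ EB) i ∧ ¬ GoodI h k (EA ∪ EB) (i+1)))
        ≤ PrW p (edgeCandidates n \ A) (fun EB => ∃ sc ∈ Finset.Icc 1 N,
            ∃ q ∈ (Finset.powersetCard sc (Finset.univ : Finset (Fin N))) ×ˢ
              (Finset.powersetCard (sc-1) (Finset.univ : Finset (Fin N))),
            ∀ x ∈ q.1 ×ˢ ((Finset.univ : Finset (Fin N)) \ q.2), ¬ D x ⊆ EB) :=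
          PrW_mono' hp hp1 _ himp
      _ ≤ ∑ sc ∈ Finset.Icc 1 N, PrW p (edgeCandidates n \ A) (fun EB =>
            ∃ q ∈ (Finset.powersetCard sc (Finset.univ : Finset (Fin N))) ×ˢ
              (Finset.powersetCard (sc-1) (Finset.univ : Finset (Fin N))),
            ∀ x ∈ q.1 ×ˢ ((Finset.univ : Finset (Fin N)) \ q.2), ¬ D x ⊆ EB) :=
          PrW_union_bound hp hp1 _ _ _
      _ ≤ ∑ sc ∈ Finset.Icc 1 N,
            ∑ q ∈ (Finset.powersetCard sc (Finset.univ : Finset (Fin N))) ×ˢ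
              (Finset.powersetCard (sc-1) (Finset.univ : Finset (Fin N))),
            PrW p (edgeCandidates n \ A) (fun EB =>
              ∀ x ∈ q.1 ×ˢ ((Finset.univ : Finset (Fin N)) \ q.2), ¬ D x ⊆ EB) := by
          apply Finset.sum_le_sum
          intro sc hsc
          exact PrW_union_bound hp hp1 _ _ _
      _ ≤ ∑ sc ∈ Finset.Icc 1 N,
            ∑ q ∈ (Finset.powersetCard sc (Finset.univ : Finset (Fin N))) ×ˢ
              (Finset.powersetCard (sc-1) (Finset.univ : Finset (Fin N))),
            (1 - p^k) ^ (sc * (N - sc + 1)) := by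
          apply Finset.sum_le_sum
          intro sc hsc
          apply Finset.sum_le_sum
          intro q hq
          exact hBadST sc hsc q hq
      _ ≤ ∑ sc ∈ Finset.Icc 1 N, γ := by
          apply Finset.sum_le_sum
          intro sc hsc
          rw [Finset.mem_Icc] at hsc
          rw [Finset.sum_const, hpairs_card, nsmul_eq_mul]
          calc ((N.choose sc * N.choose (sc-1) : ℕ) : ℝ) * (1 - p^k) ^ (sc * (N - sc + 1))
              = ((N.choose sc : ℝ) * (N.choose (sc-1) : ℝ)) * (1 - p^k) ^ (sc * (N - sc + 1)) := by
                push_cast; ring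
            _ ≤ γ := hterm sc hsc.1 hsc.2
      _ = N * γ := by
          rw [Finset.sum_const, Nat.card_Icc, nsmul_eq_mul]
          norm_num

lemma PrW_compl' {α : Type*} [DecidableEq α] (p : ℝ) (A : Finset α) (Q : Finset α → Prop) :
    PrW p A Q + PrW p A (fun E => ¬ Q E) = 1 := by
  classical
  rw [PrW_eq, PrW_eq, ← Finset.sum_add_distrib, ← sum_pw' p A]
  apply Finset.sum_congr rfl
  intro E _
  by_cases hq : Q E <;> simp [hq]

open RandomGraphs in
lemma good_hasFactor {n r k : ℕ} (h : r * (n / r) ≤ n) (hN : 0 < n / r)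
    (E : Finset (Sym2 (Fin n))) (hG : GoodI h k E r) :
    HasFactor (graphPow (SimpleGraph.pathGraph r) k)
      (SimpleGraph.fromEdgeSet (↑E : Set (Sym2 (Fin n)))) := by
  obtain ⟨σ, hinj, hadj⟩ := hG
  refine ⟨fun j c => idx h c (σ c j), ?_, ?_⟩
  · intro j
    constructor
    · intro u v huv
      exact (idx_inj h hN huv).1
    · intro u v huv
      obtain ⟨hne, h1, h2⟩ := pow_path_adj huv
      rcases Nat.lt_or_ge u.val v.val with hlt | hge
      · have hmem := hadj j v u hlt v.isLt (by omega)
        have hne2 : (idx h v (σ v j) : Fin n) ≠ idx h u (σ u j) := by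
          intro he
          exact hne ((idx_inj h hN he).1).symm
        exact ((SimpleGraph.fromEdgeSet_adj _).mpr ⟨Finset.mem_coe.mpr hmem, hne2⟩).symm
      · have hlt : v.val < u.val := by
          rcases Nat.lt_or_ge v.val u.val with hlt | hge'
          · exact hlt
          · exact absurd (Fin.ext (le_antisymm hge' hge)) hne
        have hmem := hadj j u v hlt u.isLt (by omega)
        have hne2 : (idx h u (σ u j) : Fin n) ≠ idx h v (σ v j) := by
          intro he
          exact hne (idx_inj h hN he).1
        exact (SimpleGraph.fromEdgeSet_adj _).mpr ⟨Finset.mem_coe.mpr hmem, hne2⟩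
  · intro j j' hjj u v he
    have h2 := idx_inj h hN he
    apply hjj
    have hu : u = v := h2.1
    subst hu
    exact hinj u h2.2

lemma not_good_decompose {n r N k : ℕ} (h : r * N ≤ n) (hr : 1 ≤ r)
    (E : Finset (Sym2 (Fin n))) (hbad : ¬ GoodI h k E r) :
    ∃ i ∈ Finset.Ico 1 r, GoodI h k E i ∧ ¬ GoodI h k E (i+1) := by
  by_contra hcon
  push_neg at hcon
  simp only [Finset.mem_Ico] at hcon
  apply hbad
  have key : ∀ m, 1 ≤ m → m ≤ r → GoodI h k E m := by
    intro m hm1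
    induction m, hm1 using Nat.le_induction with
    | base => intro _; exact goodI_one h k E
    | succ m hm ih =>
      intro hmr
      exact hcon m ⟨hm, by omega⟩ (ih (by omega))
  exact key r (by omega) le_rfl

open RandomGraphs in
lemma factor_prob_lb (n r k : ℕ) (hr : 2 ≤ r) (hk : 1 ≤ k) {p : ℝ} (hp : 0 ≤ p) (hp1 : p ≤ 1)
    (hN : 0 < n / r)
    (hγ1 : ((n / r : ℕ) : ℝ)^2 * Real.exp (-(p^k * (n / r : ℕ))/2) ≤ 1) :
    1 - (r : ℝ) * (n / r : ℕ) * (((n / r : ℕ) : ℝ)^2 * Real.exp (-(p^k * (n / r : ℕ))/2))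
      ≤ prob n p (fun G => HasFactor (graphPow (SimpleGraph.pathGraph r) k) G) := by
  classical
  have h : r * (n / r) ≤ n := by rw [mul_comm]; exact Nat.div_mul_le_self n r
  set N := n / r with hNdef
  set γ : ℝ := ((N : ℕ) : ℝ)^2 * Real.exp (-(p^k * N)/2) with hγdef
  have hγ0 : 0 ≤ γ := by positivity
  have hbridge : prob n p (fun G => HasFactor (graphPow (SimpleGraph.pathGraph r) k) G)
      = PrW p (edgeCandidates n)
          (fun E => HasFactor (graphPow (SimpleGraph.pathGraph r) k)
            (SimpleGraph.fromEdgeSet (↑E : Set (Sym2 (Fin n))))) := rfl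
  rw [hbridge]
  have hmono : PrW p (edgeCandidates n) (fun E => GoodI h k E r)
      ≤ PrW p (edgeCandidates n)
          (fun E => HasFactor (graphPow (SimpleGraph.pathGraph r) k)
            (SimpleGraph.fromEdgeSet (↑E : Set (Sym2 (Fin n))))) :=
    PrW_mono' hp hp1 _ (fun E _ hG => good_hasFactor h hN E hG)
  have hcompl := PrW_compl' p (edgeCandidates n) (fun E => GoodI h k E r)
  have hub : PrW p (edgeCandidates n) (fun E => ¬ GoodI h k E r)
      ≤ ((r - 1 : ℕ) : ℝ) * ((N : ℝ) * γ) := by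
    calc PrW p (edgeCandidates n) (fun E => ¬ GoodI h k E r)
        ≤ PrW p (edgeCandidates n)
            (fun E => ∃ i ∈ Finset.Ico 1 r, GoodI h k E i ∧ ¬ GoodI h k E (i+1)) :=
          PrW_mono' hp hp1 _
            (fun E _ hbad => not_good_decompose h (by omega) E hbad)
      _ ≤ ∑ i ∈ Finset.Ico 1 r,
            PrW p (edgeCandidates n) (fun E => GoodI h k E i ∧ ¬ GoodI h k E (i+1)) :=
          PrW_union_bound hp hp1 _ _ _
      _ ≤ ∑ i ∈ Finset.Ico 1 r, (N : ℝ) * γ := by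
          apply Finset.sum_le_sum
          intro i hi
          rw [Finset.mem_Ico] at hi
          exact step_bound h hN hk hp hp1 hi.1 hi.2 hγ1
      _ = ((r - 1 : ℕ) : ℝ) * ((N : ℝ) * γ) := by
          rw [Finset.sum_const, Nat.card_Ico, nsmul_eq_mul]
  have hr1 : ((r - 1 : ℕ) : ℝ) ≤ (r : ℝ) := by
    have : (r - 1 : ℕ) ≤ r := Nat.sub_le r 1
    exact_mod_cast this
  have hNγ0 : (0:ℝ) ≤ (N : ℝ) * γ := by positivity
  nlinarith [hmono, hcompl, hub, hr1, hNγ0]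


lemma pow_le_exp_mul (M : ℕ) (hM : 1 ≤ M) {x : ℝ} (hx : 0 ≤ x) :
    x ^ M ≤ (M:ℝ)^M * Real.exp x := by
  have hM0 : (0:ℝ) < M := by exact_mod_cast hM
  have h1 : x / M ≤ Real.exp (x / M) := by
    have := Real.add_one_le_exp (x / M)
    linarith
  have h2 : (x / M) ^ M ≤ (Real.exp (x / M)) ^ M :=
    pow_le_pow_left₀ (by positivity) h1 M
  have h3 : (Real.exp (x / M)) ^ M = Real.exp x := by
    rw [← Real.exp_nat_mul]
    congr 1
    field_simp
  calc x ^ M = ((x / M) * M) ^ M := by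
        congr 1
        field_simp
    _ = (x / M)^M * (M:ℝ)^M := by rw [mul_pow]
    _ ≤ Real.exp x * (M:ℝ)^M := by
        apply mul_le_mul_of_nonneg_right _ (by positivity)
        rw [← h3]; exact h2
    _ = (M:ℝ)^M * Real.exp x := by ring

lemma exp_neg_le_div {M : ℕ} (hM : 1 ≤ M) {y : ℝ} (hy : 0 < y) :
    Real.exp (-y) ≤ (M:ℝ)^M / y^M := by
  have hpow := pow_le_exp_mul M hM hy.le
  have hyM : (0:ℝ) < y^M := by positivity
  rw [le_div_iff₀ hyM]
  have h4 : Real.exp (-y) * y ^ M ≤ Real.exp (-y) * ((M:ℝ)^M * Real.exp y) :=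
    mul_le_mul_of_nonneg_left hpow (Real.exp_nonneg _)
  have h5 : Real.exp (-y) * ((M:ℝ)^M * Real.exp y) = (M:ℝ)^M := by
    rw [show Real.exp (-y) * ((M:ℝ)^M * Real.exp y) = (M:ℝ)^M * (Real.exp (-y) * Real.exp y)
      from by ring, ← Real.exp_add, neg_add_cancel, Real.exp_zero, mul_one]
  linarith

lemma tendsto_pow_mul_exp_neg_rpow (m : ℕ) (c a : ℝ) (hc : 0 < c) (ha : 0 < a) :
    Filter.Tendsto (fun n : ℕ => (n:ℝ)^m * Real.exp (-(c * (n:ℝ)^a)))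
      Filter.atTop (nhds 0) := by
  obtain ⟨M, hM1, hMa⟩ : ∃ M : ℕ, 1 ≤ M ∧ (m:ℝ) + 1 ≤ a * M := by
    refine ⟨max 1 ⌈((m:ℝ)+1)/a⌉₊, le_max_left _ _, ?_⟩
    have h1 : ((m:ℝ)+1)/a ≤ ⌈((m:ℝ)+1)/a⌉₊ := Nat.le_ceil _
    have h2 : (⌈((m:ℝ)+1)/a⌉₊ : ℝ) ≤ (max 1 ⌈((m:ℝ)+1)/a⌉₊ : ℕ) := by
      exact_mod_cast le_max_right _ _
    calc (m:ℝ) + 1 = (((m:ℝ)+1)/a) * a := by field_simp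
      _ ≤ (max 1 ⌈((m:ℝ)+1)/a⌉₊ : ℕ) * a := by
          apply mul_le_mul_of_nonneg_right (le_trans h1 h2) ha.le
      _ = a * (max 1 ⌈((m:ℝ)+1)/a⌉₊ : ℕ) := by ring
  set K : ℝ := (M:ℝ)^M / c^M with hK
  have hK0 : 0 ≤ K := by positivity
  apply squeeze_zero' (g := fun n : ℕ => K * (n:ℝ)⁻¹)
  · filter_upwards [Filter.eventually_ge_atTop 1] with n hn
    positivity
  · filter_upwards [Filter.eventually_ge_atTop 1] with n hn
    have hn1 : (1:ℝ) ≤ (n:ℝ) := by exact_mod_cast hn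
    have hn0 : (0:ℝ) < (n:ℝ) := by linarith
    have hna : (0:ℝ) < (n:ℝ)^a := Real.rpow_pos_of_pos hn0 a
    have hy : (0:ℝ) < c * (n:ℝ)^a := by positivity
    calc (n:ℝ)^m * Real.exp (-(c * (n:ℝ)^a))
        ≤ (n:ℝ)^m * ((M:ℝ)^M / (c * (n:ℝ)^a)^M) := by
          apply mul_le_mul_of_nonneg_left (exp_neg_le_div hM1 hy) (by positivity)
      _ = K * ((n:ℝ)^m / ((n:ℝ)^a)^M) := by
          rw [hK, mul_pow]
          field_simp
      _ = K * ((n:ℝ)^(m:ℝ) / (n:ℝ)^(a * M)) := by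
          congr 2
          · exact (Real.rpow_natCast _ m).symm
          · rw [Real.rpow_mul hn0.le, Real.rpow_natCast]
      _ = K * (n:ℝ)^((m:ℝ) - a * M) := by
          rw [Real.rpow_sub hn0]
      _ ≤ K * (n:ℝ)^(-1:ℝ) := by
          apply mul_le_mul_of_nonneg_left _ hK0
          apply Real.rpow_le_rpow_of_exponent_le hn1
          linarith
      _ = K * (n:ℝ)⁻¹ := by rw [Real.rpow_neg_one]
  · have h1 : Filter.Tendsto (fun n : ℕ => (n:ℝ)⁻¹) Filter.atTop (nhds 0) :=
      tendsto_inv_atTop_nhds_zero_nat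
    have h2 := h1.const_mul K
    simpa using h2

end RG

open RG

/-- Suppose that `ε > 0`, that `k, r ≥ 2` are integers, and that
`p = p(n) ≥ n^(-1/k + ε)`. Then a.a.s. `G_{n,p}` has a `P_r^k`-factor. -/

theorem aas_path_power_factor (ε : ℝ) (hε : 0 < ε) (k r : ℕ) (hk : 2 ≤ k) (hr : 2 ≤ r)
    (p : ℕ → ℝ) (hp : ∀ n, 0 ≤ p n ∧ p n ≤ 1)
    (hplb : ∀ n : ℕ, 1 ≤ n → (n : ℝ) ^ (-1 / (k : ℝ) + ε) ≤ p n) :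
    Tendsto
      (fun n => prob n (p n)
        (fun G => HasFactor (graphPow (SimpleGraph.pathGraph r) k) G))
      atTop (nhds 1) := by
  classical
  have hrpos : (0:ℝ) < r := by exact_mod_cast (by omega : 0 < r)
  have hkpos : (0:ℝ) < k := by exact_mod_cast (by omega : 0 < k)
  set a : ℝ := (k:ℝ) * ε with ha
  have ha0 : 0 < a := by positivity
  set cc : ℝ := (4 * (r:ℝ))⁻¹ with hcc
  have hcc0 : 0 < cc := by positivity
  have hlim3 : Tendsto (fun n : ℕ => (n:ℝ)^(3:ℕ) * Real.exp (-(cc * (n:ℝ)^a)))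
      atTop (nhds 0) := tendsto_pow_mul_exp_neg_rpow 3 cc a hcc0 ha0
  have hlim2 : Tendsto (fun n : ℕ => (n:ℝ)^(2:ℕ) * Real.exp (-(cc * (n:ℝ)^a)))
      atTop (nhds 0) := tendsto_pow_mul_exp_neg_rpow 2 cc a hcc0 ha0
  set B : ℕ → ℝ := fun n => (r:ℝ) * ((n:ℝ)^(3:ℕ) * Real.exp (-(cc * (n:ℝ)^a))) with hB
  have hBlim : Tendsto B atTop (nhds 0) := by
    have := hlim3.const_mul (r:ℝ)
    simpa using this
  have hBlim1 : Tendsto (fun n => 1 - B n) atTop (nhds 1) := by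
    have := hBlim.const_sub 1
    simpa using this
  have hev2 : ∀ᶠ n : ℕ in atTop, (n:ℝ)^(2:ℕ) * Real.exp (-(cc * (n:ℝ)^a)) ≤ 1 := by
    have := hlim2.eventually (eventually_le_nhds (by norm_num : (0:ℝ) < 1))
    exact this
  -- the eventual lower bound
  have hlower : ∀ᶠ n : ℕ in atTop,
      1 - B n ≤ prob n (p n)
        (fun G => HasFactor (graphPow (SimpleGraph.pathGraph r) k) G) := by
    filter_upwards [eventually_ge_atTop (2*r), eventually_ge_atTop 1, hev2]
      with n hn2r hn1 hbar1
    have hp0 : 0 ≤ p n := (hp n).1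
    have hp1 : p n ≤ 1 := (hp n).2
    have hn0 : (0:ℝ) < (n:ℝ) := by exact_mod_cast (by omega : 0 < n)
    have hnR1 : (1:ℝ) ≤ (n:ℝ) := by exact_mod_cast hn1
    have hn2rR : 2*(r:ℝ) ≤ (n:ℝ) := by exact_mod_cast hn2r
    -- p^k lower bound
    have hpk : (n:ℝ)^(a - 1) ≤ (p n) ^ k := by
      have hnn : (0:ℝ) ≤ (n:ℝ)^((-1)/(k:ℝ) + ε) := Real.rpow_nonneg hn0.le _
      have h1 : ((n:ℝ)^((-1)/(k:ℝ) + ε))^k ≤ (p n)^k :=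
        pow_le_pow_left₀ hnn (hplb n hn1) k
      have h2 : ((n:ℝ)^((-1)/(k:ℝ) + ε))^k = (n:ℝ)^(((-1)/(k:ℝ) + ε) * k) := by
        rw [← Real.rpow_natCast ((n:ℝ)^((-1)/(k:ℝ) + ε)) k, ← Real.rpow_mul hn0.le]
      have h3 : ((-1)/(k:ℝ) + ε) * k = a - 1 := by
        field_simp [ha]
        ring
      rw [← h3, ← h2]
      exact h1
    set N : ℕ := n / r with hN
    have hNpos : 0 < N := Nat.div_pos (by omega) (by omega)
    have hNn : N ≤ n := Nat.div_le_self n r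
    have hNnR : ((N:ℕ):ℝ) ≤ (n:ℝ) := by exact_mod_cast hNn
    have hN0R : (0:ℝ) ≤ (N:ℝ) := by positivity
    -- N is at least n/(2r)
    have hNlow : (n:ℝ)/(2*(r:ℝ)) ≤ (N:ℝ) := by
      have hmod := Nat.div_add_mod n r
      have hmlt : n % r < r := Nat.mod_lt _ (by omega)
      have hlt : n < r * N + r := by rw [hN]; omega
      have hltR : (n:ℝ) < (r:ℝ) * (N:ℝ) + (r:ℝ) := by exact_mod_cast hlt
      rw [div_le_iff₀ (by positivity)]
      nlinarith
    -- exponent comparison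
    have hexp : cc * (n:ℝ)^a ≤ (p n)^k * (N:ℝ) / 2 := by
      have hstep : (n:ℝ)^(a-1) * ((n:ℝ)/(2*(r:ℝ))) ≤ (p n)^k * (N:ℝ) :=
        mul_le_mul hpk hNlow (by positivity) (pow_nonneg hp0 k)
      have heq : (n:ℝ)^(a-1) * ((n:ℝ)/(2*(r:ℝ))) = (n:ℝ)^a / (2*(r:ℝ)) := by
        rw [Real.rpow_sub hn0, Real.rpow_one]
        field_simp
      rw [heq] at hstep
      have hr0 : (r:ℝ) ≠ 0 := ne_of_gt hrpos
      have : cc * (n:ℝ)^a = ((n:ℝ)^a / (2*(r:ℝ))) / 2 := by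
        rw [hcc]
        field_simp
        try ring
        try exact Or.inl trivial
      rw [this]
      linarith
    -- gamma bound
    have hγbar : ((N:ℕ):ℝ)^2 * Real.exp (-((p n)^k * (N:ℝ))/2)
        ≤ (n:ℝ)^(2:ℕ) * Real.exp (-(cc * (n:ℝ)^a)) := by
      apply mul_le_mul
      · exact pow_le_pow_left₀ hN0R hNnR 2
      · apply Real.exp_le_exp.mpr
        linarith
      · exact Real.exp_nonneg _
      · positivity
    have hγ1 : ((N:ℕ):ℝ)^2 * Real.exp (-((p n)^k * (N:ℝ))/2) ≤ 1 :=
      le_trans hγbar hbar1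
    have hlb := factor_prob_lb n r k hr (by omega) hp0 hp1 hNpos hγ1
    have hBn : (r:ℝ) * (N:ℝ) * (((N:ℕ):ℝ)^2 * Real.exp (-((p n)^k * (N:ℝ))/2)) ≤ B n := by
      have hstep : (r:ℝ) * (N:ℝ) * (((N:ℕ):ℝ)^2 * Real.exp (-((p n)^k * (N:ℝ))/2))
          ≤ (r:ℝ) * (n:ℝ) * ((n:ℝ)^(2:ℕ) * Real.exp (-(cc * (n:ℝ)^a))) := by
        apply mul_le_mul
        · exact mul_le_mul_of_nonneg_left hNnR (by positivity)
        · exact hγbar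
        · positivity
        · positivity
      calc (r:ℝ) * (N:ℝ) * (((N:ℕ):ℝ)^2 * Real.exp (-((p n)^k * (N:ℝ))/2))
          ≤ (r:ℝ) * (n:ℝ) * ((n:ℝ)^(2:ℕ) * Real.exp (-(cc * (n:ℝ)^a))) := hstep
        _ = B n := by rw [hB]; ring
    calc 1 - B n
        ≤ 1 - (r:ℝ) * (N:ℝ) * (((N:ℕ):ℝ)^2 * Real.exp (-((p n)^k * (N:ℝ))/2)) := by
          linarith
      _ ≤ prob n (p n) (fun G => HasFactor (graphPow (SimpleGraph.pathGraph r) k) G) := hlb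
  have hupper : ∀ᶠ n : ℕ in atTop,
      prob n (p n) (fun G => HasFactor (graphPow (SimpleGraph.pathGraph r) k) G) ≤ 1 := by
    apply Eventually.of_forall
    intro n
    have hbridge : prob n (p n) (fun G => HasFactor (graphPow (SimpleGraph.pathGraph r) k) G)
        = PrW (p n) (edgeCandidates n)
            (fun E => HasFactor (graphPow (SimpleGraph.pathGraph r) k)
              (SimpleGraph.fromEdgeSet (↑E : Set (Sym2 (Fin n))))) := rfl
    rw [hbridge]
    exact PrW_le_one' (hp n).1 (hp n).2 _ _
  exact tendsto_of_tendsto_of_tendsto_of_le_of_le' hBlim1 tendsto_const_nhds hlower hupper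
end

section
/- Let k, r ≥ 2 be integers. Then d_1^max(P_r^k) ≤ k, i.e. every subgraph H of P_r^k with at least 2 vertices satisfies e_H/(v_H − 1) ≤ k. -/
open RandomGraphs

private lemma walk_val_bound {n : ℕ} {u v : Fin n} (p : (SimpleGraph.pathGraph n).Walk u v) :
    v.val ≤ u.val + p.length ∧ u.val ≤ v.val + p.length := by
  induction p with
  | nil => simp
  | cons h p ih =>
    rw [SimpleGraph.pathGraph_adj] at h
    simp only [SimpleGraph.Walk.length_cons]
    omega

private lemma adj_val_bound {k r : ℕ} {u v : Fin r}
    (h : (graphPow (SimpleGraph.pathGraph r) k).Adj u v) :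
    u ≠ v ∧ v.val ≤ u.val + k ∧ u.val ≤ v.val + k := by
  obtain ⟨hne, hreach, hdist⟩ := h
  obtain ⟨p, hp⟩ := hreach.exists_walk_length_eq_dist
  have := walk_val_bound p
  exact ⟨hne, by omega, by omega⟩

private lemma sym2_min_max {r : ℕ} (a b : Fin r) : s(a, b) = s(min a b, max a b) := by
  rcases le_total a b with h | h
  · rw [min_eq_left h, max_eq_right h]
  · rw [min_eq_right h, max_eq_left h, Sym2.eq_swap]

/-- Let `k, r ≥ 2` be integers. Then `d₁^max (P_r^k) ≤ k`, i.e. every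
subgraph `H` of `P_r^k` with at least 2 vertices satisfies `e_H / (v_H - 1) ≤ k`. -/
theorem one_density_path_power_le (k r : ℕ) (hk : 2 ≤ k) (hr : 2 ≤ r) :
    ∀ H : (graphPow (SimpleGraph.pathGraph r) k).Subgraph, 2 ≤ H.verts.ncard →
      (H.edgeSet.ncard : ℝ) / ((H.verts.ncard : ℝ) - 1) ≤ k := by
  intro H hv
  have hfin : H.verts.Finite := Set.toFinite _
  have hne : (hfin.toFinset).Nonempty := by
    rw [Finset.nonempty_iff_ne_empty]
    intro h
    have : H.verts = ∅ := by simpa [h] using hfin.coe_toFinset.symm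
    simp [this] at hv
  set m : Fin r := hfin.toFinset.min' hne with hm
  have hmmem : m ∈ H.verts := by
    have := hfin.toFinset.min'_mem hne
    rwa [Set.Finite.mem_toFinset] at this
  have hmmin : ∀ x ∈ H.verts, m ≤ x := by
    intro x hx
    exact hfin.toFinset.min'_le x (by rwa [Set.Finite.mem_toFinset])
  -- the injection from edges
  set f : Sym2 (Fin r) → Fin r × ℕ :=
    Sym2.lift ⟨fun a b => (max a b, (max a b).val - (min a b).val - 1), by
      intro a b; simp [max_comm, min_comm]⟩ with hf
  have key : ∀ {a b : Fin r}, H.Adj a b →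
      (min a b).val < (max a b).val ∧ (max a b).val ≤ (min a b).val + k ∧
      max a b ∈ H.verts ∧ min a b ∈ H.verts := by
    intro a b hab
    obtain ⟨hne', h1, h2⟩ := adj_val_bound (H.adj_sub hab)
    have hne2 : (a : ℕ) ≠ (b : ℕ) := fun h => hne' (Fin.ext h)
    have hmem1 := H.edge_vert hab
    have hmem2 := H.edge_vert hab.symm
    rcases le_total a b with h | h
    · rw [min_eq_left h, max_eq_right h]
      have : (a : ℕ) ≤ b := h
      exact ⟨by omega, by omega, hmem2, hmem1⟩
    · rw [min_eq_right h, max_eq_left h]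
      have : (b : ℕ) ≤ a := h
      exact ⟨by omega, by omega, hmem1, hmem2⟩
  -- edgeSet injects into (verts \ {m}) ×ˢ Iio k
  have hmaps : ∀ e ∈ H.edgeSet, f e ∈ (H.verts \ {m}) ×ˢ Set.Iio k := by
    intro e he
    induction e with
    | _ a b =>
      rw [SimpleGraph.Subgraph.mem_edgeSet] at he
      obtain ⟨hlt, hle, hmax, hmin⟩ := key he
      have hmne : max a b ≠ m := by
        intro h
        have h1 : (m : ℕ) ≤ (min a b).val := hmmin _ hmin
        have h2 : (max a b).val = (m : ℕ) := congrArg Fin.val h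
        omega
      simp only [hf, Sym2.lift_mk, Set.mem_prod, Set.mem_Iio, Set.mem_diff,
        Set.mem_singleton_iff]
      exact ⟨⟨hmax, hmne⟩, by omega⟩
  have hinj : Set.InjOn f H.edgeSet := by
    intro e1 he1 e2 he2 hfe
    induction e1 with
    | _ a b =>
      induction e2 with
      | _ c d =>
        rw [SimpleGraph.Subgraph.mem_edgeSet] at he1 he2
        obtain ⟨hlt1, -, -, -⟩ := key he1
        obtain ⟨hlt2, -, -, -⟩ := key he2
        simp only [hf, Sym2.lift_mk, Prod.mk.injEq] at hfe
        obtain ⟨hmax, hd⟩ := hfe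
        have hminval : (min a b).val = (min c d).val := by
          have := congrArg Fin.val hmax
          omega
        have hmin : min a b = min c d := Fin.ext hminval
        rw [sym2_min_max a b, sym2_min_max c d, hmin, hmax]
  have hcount : H.edgeSet.ncard ≤ (H.verts.ncard - 1) * k := by
    have h1 := Set.ncard_le_ncard_of_injOn f hmaps hinj (Set.toFinite _)
    have h2 : ((H.verts \ {m}) ×ˢ Set.Iio k).ncard = (H.verts.ncard - 1) * k := by
      have hp : ((H.verts \ {m}) ×ˢ Set.Iio k).ncard
          = (H.verts \ {m}).ncard * (Set.Iio k).ncard := by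
        rw [← Nat.card_coe_set_eq, Nat.card_congr (Equiv.Set.prod _ _), Nat.card_prod,
          Nat.card_coe_set_eq, Nat.card_coe_set_eq]
      rw [hp, Set.ncard_diff_singleton_of_mem hmmem]
      congr 1
      rw [← Nat.card_coe_set_eq, Nat.card_eq_fintype_card]
      rw [← Set.toFinset_card, Set.toFinset_Iio, Nat.card_Iio]
    omega
  -- conclude
  have hv1 : (1 : ℝ) ≤ (H.verts.ncard : ℝ) - 1 := by
    have : (2 : ℝ) ≤ (H.verts.ncard : ℝ) := by exact_mod_cast hv
    linarith
  rw [div_le_iff₀ (by linarith)]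
  have : ((H.edgeSet.ncard : ℝ)) ≤ ((H.verts.ncard - 1 : ℕ) : ℝ) * k := by
    exact_mod_cast hcount
  have hcast : ((H.verts.ncard - 1 : ℕ) : ℝ) = (H.verts.ncard : ℝ) - 1 := by
    have : 1 ≤ H.verts.ncard := by omega
    push_cast [this]
    ring
  rw [hcast] at this
  linarith
end

section
/- Let k ≥ 2, j ≥ 3 and ℓ ≥ 2k, and consider the skeleton of the (j,ℓ,k)-absorber with spine P and absorption vertex v. Then the graph P' obtained from the skeleton by deleting the edges a_{i,1}a_{i,2} and b_{i,1}b_{i,2} for all i = 1,…,j is a path with vertex set V(P) ∪ {v} whose endvertices are the same as the endvertices of P. -/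
open Filter

open RandomGraphs


namespace RandomGraphs

/-- Number of vertices of the spine `P` of the `(j,ℓ,k)`-absorber: `s = j(2ℓ+4)+ℓ`. -/
def absSpineLen (j ℓ : ℕ) : ℕ := j * (2 * ℓ + 4) + ℓ

/-- The (0-based) position of the junction `a_{i,1}` (for `1 ≤ i ≤ j`);
in 1-based terms it is the `(ℓ+1)`-st vertex of the segment `S_i`. -/
def aJ1 (ℓ i : ℕ) : ℕ := (i - 1) * (2 * ℓ + 4) + ℓ

/-- The (0-based) position of the junction `a_{i,2}`. -/
def aJ2 (ℓ i : ℕ) : ℕ := (i - 1) * (2 * ℓ + 4) + ℓ + 1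

/-- The (0-based) position of the junction `b_{i,1}`. -/
def bJ1 (ℓ i : ℕ) : ℕ := (i - 1) * (2 * ℓ + 4) + 2 * ℓ + 2

/-- The (0-based) position of the junction `b_{i,2}`. -/
def bJ2 (ℓ i : ℕ) : ℕ := (i - 1) * (2 * ℓ + 4) + 2 * ℓ + 3

/-- The spine `P`: the path `0 - 1 - ⋯ - (s-1)` on the vertex set `Fin (s+1)`,
where the last vertex `s` is the absorption vertex `v` (not on `P`). -/
def absSpine (j ℓ : ℕ) : SimpleGraph (Fin (absSpineLen j ℓ + 1)) :=
  SimpleGraph.fromRel (fun u v => (u : ℕ) + 1 = (v : ℕ) ∧ (v : ℕ) < absSpineLen j ℓ)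

/-- The extra edges of the skeleton of the `(j,ℓ,k)`-absorber (as a relation on the
numerical values of the vertices): the two edges `a_{1,1}v`, `v b_{1,2}` at the absorption
vertex `v` (which has value `s`), together with all the junction edges. -/
def absExtraRel (j ℓ : ℕ) (x y : ℕ) : Prop :=
  (x = absSpineLen j ℓ ∧ (y = aJ1 ℓ 1 ∨ y = bJ2 ℓ 1)) ∨
  (∃ i, 1 ≤ i ∧ i ≤ j - 2 ∧
    ((x = aJ2 ℓ i ∧ y = bJ2 ℓ (i + 1)) ∨ (x = bJ1 ℓ i ∧ y = aJ1 ℓ (i + 1)))) ∨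
  (x = aJ2 ℓ j ∧ y = bJ2 ℓ j) ∨
  (x = aJ2 ℓ (j - 1) ∧ y = aJ1 ℓ j) ∨
  (x = bJ1 ℓ (j - 1) ∧ y = bJ1 ℓ j)

/-- The skeleton of the `(j,ℓ,k)`-absorber: the spine `P` together with the absorption
vertex `v` and the edges `a_{1,1}v`, `vb_{1,2}` and the junction edges. -/
def absSkeleton (j ℓ : ℕ) : SimpleGraph (Fin (absSpineLen j ℓ + 1)) :=
  SimpleGraph.fromRel (fun u v =>
    ((u : ℕ) + 1 = (v : ℕ) ∧ (v : ℕ) < absSpineLen j ℓ) ∨ absExtraRel j ℓ u v)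

/-- The augmented path `P'` of the `(j,ℓ,k)`-absorber: obtained from the skeleton by
deleting the edges `a_{i,1}a_{i,2}` and `b_{i,1}b_{i,2}` for all `i = 1, …, j`. -/
def absAugPath (j ℓ : ℕ) : SimpleGraph (Fin (absSpineLen j ℓ + 1)) :=
  SimpleGraph.fromRel (fun u v =>
    ((u : ℕ) + 1 = (v : ℕ) ∧ (v : ℕ) < absSpineLen j ℓ ∧
      ¬ ∃ i, 1 ≤ i ∧ i ≤ j ∧ ((u : ℕ) = aJ1 ℓ i ∨ (u : ℕ) = bJ1 ℓ i)) ∨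
    absExtraRel j ℓ u v)

/-- The `(j,ℓ,k)`-absorber `A_{j,ℓ,k} = P^k ∪ (P')^k`, a graph on `s+1` vertices. -/
def absorber (j ℓ k : ℕ) : SimpleGraph (Fin (absSpineLen j ℓ + 1)) :=
  graphPow (absSpine j ℓ) k ⊔ graphPow (absAugPath j ℓ) k

end RandomGraphs


namespace AbsAux

open RandomGraphs

/-! ### Arithmetic helpers -/

lemma mul_cancel_aux {m a b c d : ℕ} (hc : c < m) (hd : d < m)
    (h : a*m+c = b*m+d) : a = b ∧ c = d := by
  have hm : 0 < m := by omega
  have h1 : c = d := by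
    have := congrArg (· % m) h
    simpa [mul_comm, Nat.mul_add_mod, Nat.mod_eq_of_lt hc, Nat.mod_eq_of_lt hd] using this
  refine ⟨?_, h1⟩
  have h2 : a*m = b*m := by omega
  exact Nat.eq_of_mul_eq_mul_right hm h2

lemma mul_step {a b c : ℕ} (m : ℕ) (h : a + c ≤ b) : a*m + c*m ≤ b*m := by
  have := Nat.mul_le_mul_right m h; rwa [add_mul] at this

lemma expand_mul {a b : ℕ} (m : ℕ) (h : a + 1 = b) : b*m = a*m + m := by
  subst h; ring

def tau (j ℓ t : ℕ) : ℕ :=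
  if t ≤ ℓ then t
  else if t = ℓ + 1 then j*(2*ℓ+4)+ℓ
  else if (t - (ℓ+2)) % (2*ℓ+4) ≤ ℓ+1 then
    (if (t - (ℓ+2)) / (2*ℓ+4) ≤ j-2 then t+ℓ+1
     else ((t - (ℓ+2)) / (2*ℓ+4))*(2*ℓ+4) + 2*ℓ+2 - (t - (ℓ+2)) % (2*ℓ+4))
  else
    (if (t - (ℓ+2)) / (2*ℓ+4) ≤ j-3 then
        ((t - (ℓ+2)) / (2*ℓ+4))*(2*ℓ+4) + 3*ℓ+4 - (t - (ℓ+2)) % (2*ℓ+4)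
     else if (t - (ℓ+2)) / (2*ℓ+4) = j-2 then t-ℓ-3 else t-1)

def rho (j ℓ x : ℕ) : ℕ :=
  if x = j*(2*ℓ+4)+ℓ then ℓ+1
  else if x ≤ ℓ then x
  else if x % (2*ℓ+4) ≤ ℓ ∨ x % (2*ℓ+4) = 2*ℓ+3 then
    (if (j-1)*(2*ℓ+4) + 2*ℓ+3 ≤ x then x+1 else x-ℓ-1)
  else if x / (2*ℓ+4) ≤ j-3 then (x / (2*ℓ+4))*(2*ℓ+4) + 4*ℓ+6 - x % (2*ℓ+4)
  else if x / (2*ℓ+4) = j-2 then x+ℓ+3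
  else (x / (2*ℓ+4))*(2*ℓ+4) + 3*ℓ+4 - x % (2*ℓ+4)

lemma div_mod_aux {ℓ : ℕ} (q r : ℕ) (hr : r < 2*ℓ+4) :
    (q*(2*ℓ+4)+r) / (2*ℓ+4) = q ∧ (q*(2*ℓ+4)+r) % (2*ℓ+4) = r := by
  constructor
  · rw [mul_comm, Nat.mul_add_div (by omega), Nat.div_eq_of_lt hr]; omega
  · rw [mul_comm, Nat.mul_add_mod, Nat.mod_eq_of_lt hr]

lemma tau_eval (j ℓ q r t : ℕ) (ht : t = ℓ+2+q*(2*ℓ+4)+r) (hr : r < 2*ℓ+4) :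
    tau j ℓ t = if r ≤ ℓ+1 then
        (if q ≤ j-2 then t+ℓ+1 else q*(2*ℓ+4)+2*ℓ+2-r)
      else
        (if q ≤ j-3 then q*(2*ℓ+4)+3*ℓ+4-r
         else if q = j-2 then t-ℓ-3 else t-1) := by
  have h1 : ¬ t ≤ ℓ := by omega
  have h2 : ¬ t = ℓ+1 := by omega
  have h3 : t - (ℓ+2) = q*(2*ℓ+4)+r := by omega
  obtain ⟨hd, hm⟩ := div_mod_aux (ℓ := ℓ) q r hr
  simp only [tau, if_neg h1, if_neg h2, h3, hd, hm]

lemma rho_eval (j ℓ p c x : ℕ) (hx : x = p*(2*ℓ+4)+c) (hc : c < 2*ℓ+4)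
    (hxs : x ≠ j*(2*ℓ+4)+ℓ) (hxl : ℓ < x) :
    rho j ℓ x = if c ≤ ℓ ∨ c = 2*ℓ+3 then
        (if (j-1)*(2*ℓ+4) + 2*ℓ+3 ≤ x then x+1 else x-ℓ-1)
      else if p ≤ j-3 then p*(2*ℓ+4) + 4*ℓ+6 - c
      else if p = j-2 then x+ℓ+3
      else p*(2*ℓ+4) + 3*ℓ+4 - c := by
  have h1 : ¬ x ≤ ℓ := by omega
  obtain ⟨hd, hm⟩ := div_mod_aux (ℓ := ℓ) p c hc
  rw [← hx] at hd hm
  simp only [rho, if_neg hxs, if_neg h1, hd, hm]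

lemma tau_low (j ℓ t : ℕ) (h : t ≤ ℓ) : tau j ℓ t = t := by
  simp only [tau, if_pos h]

lemma tau_v (j ℓ : ℕ) : tau j ℓ (ℓ+1) = j*(2*ℓ+4)+ℓ := by
  rw [tau, if_neg (by omega), if_pos rfl]

lemma decomp (j ℓ t : ℕ) (hj : 3 ≤ j) (h1 : ℓ+2 ≤ t) (h2 : t ≤ j*(2*ℓ+4)+ℓ) :
    ∃ q r, t = ℓ+2+q*(2*ℓ+4)+r ∧ r < 2*ℓ+4 ∧ q ≤ j-1 ∧ (q = j-1 → r ≤ 2*ℓ+2) := by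
  have h0 : 0 < 2*ℓ+4 := by omega
  set u := t - (ℓ+2) with hu
  have hdm : (u / (2*ℓ+4))*(2*ℓ+4) + u % (2*ℓ+4) = u := by
    rw [mul_comm]; exact Nat.div_add_mod u _
  have hmlt : u % (2*ℓ+4) < 2*ℓ+4 := Nat.mod_lt _ h0
  refine ⟨u / (2*ℓ+4), u % (2*ℓ+4), by omega, hmlt, ?_, ?_⟩
  · by_contra hcon
    have : j*(2*ℓ+4) ≤ (u / (2*ℓ+4))*(2*ℓ+4) := Nat.mul_le_mul_right _ (by omega)
    omega
  · intro hq
    rw [hq] at hdm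
    have E1 : j*(2*ℓ+4) = (j-1)*(2*ℓ+4) + (1)*(2*ℓ+4) := by
      rw [← add_mul]; congr 1; omega
    omega

lemma NB_of {j ℓ p c : ℕ} (hc : c < 2*ℓ+4) (h1 : c ≠ ℓ) (h2 : c ≠ 2*ℓ+2) {x : ℕ}
    (hx : x = p*(2*ℓ+4)+c) :
    ¬ ∃ i, 1 ≤ i ∧ i ≤ j ∧ (x = aJ1 ℓ i ∨ x = bJ1 ℓ i) := by
  rintro ⟨i, -, -, h | h⟩ <;> simp only [aJ1, bJ1] at h
  · exact h1 (mul_cancel_aux hc (show ℓ < 2*ℓ+4 by omega)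
      (show p*(2*ℓ+4)+c = (i-1)*(2*ℓ+4)+ℓ by omega)).2
  · exact h2 (mul_cancel_aux hc (show 2*ℓ+2 < 2*ℓ+4 by omega)
      (show p*(2*ℓ+4)+c = (i-1)*(2*ℓ+4)+(2*ℓ+2) by omega)).2

lemma aJ1_eval (ℓ i : ℕ) : aJ1 ℓ (i+1) = i*(2*ℓ+4)+ℓ := by simp [aJ1]
lemma aJ2_eval (ℓ i : ℕ) : aJ2 ℓ (i+1) = i*(2*ℓ+4)+ℓ+1 := by simp [aJ2]
lemma bJ1_eval (ℓ i : ℕ) : bJ1 ℓ (i+1) = i*(2*ℓ+4)+2*ℓ+2 := by simp [bJ1]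
lemma bJ2_eval (ℓ i : ℕ) : bJ2 ℓ (i+1) = i*(2*ℓ+4)+2*ℓ+3 := by simp [bJ2]

lemma tau_le (j ℓ : ℕ) (hj : 3 ≤ j) (hℓ : 4 ≤ ℓ) (t : ℕ) (ht : t ≤ j*(2*ℓ+4)+ℓ) :
    tau j ℓ t ≤ j*(2*ℓ+4)+ℓ := by
  have E0 : 1*(2*ℓ+4) ≤ j*(2*ℓ+4) := Nat.mul_le_mul_right _ (by omega)
  rcases le_or_gt t ℓ with h | h
  · rw [tau_low j ℓ t h]; omega
  rcases eq_or_ne t (ℓ+1) with h2 | h2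
  · rw [h2, tau_v]
  obtain ⟨q, r, ht', hr, hq, hq2⟩ := decomp j ℓ t hj (by omega) ht
  rw [tau_eval j ℓ q r t ht' hr]
  have E1 : j*(2*ℓ+4) = (j-1)*(2*ℓ+4) + 1*(2*ℓ+4) := by rw [← add_mul]; congr 1; omega
  have E3 : q*(2*ℓ+4) ≤ (j-1)*(2*ℓ+4) := Nat.mul_le_mul_right _ hq
  rcases le_or_gt q (j-2) with hc | hc
  · have F : q*(2*ℓ+4) + 1*(2*ℓ+4) ≤ (j-1)*(2*ℓ+4) := mul_step _ (by omega)
    split_ifs <;> omega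
  · split_ifs <;> omega

lemma tau_zero (j ℓ : ℕ) : tau j ℓ 0 = 0 := tau_low j ℓ 0 (Nat.zero_le _)

lemma tau_last (j ℓ : ℕ) (hj : 3 ≤ j) (hℓ : 4 ≤ ℓ) :
    tau j ℓ (j*(2*ℓ+4)+ℓ) = j*(2*ℓ+4)+ℓ-1 := by
  have E1 : j*(2*ℓ+4) = (j-1)*(2*ℓ+4) + 1*(2*ℓ+4) := by rw [← add_mul]; congr 1; omega
  rw [tau_eval j ℓ (j-1) (2*ℓ+2) _ (by omega) (by omega), if_neg (by omega),
    if_neg (by omega), if_neg (by omega)]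

end AbsAux

namespace AbsAux

open RandomGraphs

lemma rho_tau (j ℓ : ℕ) (hj : 3 ≤ j) (hℓ : 4 ≤ ℓ) (t : ℕ) (ht : t ≤ j*(2*ℓ+4)+ℓ) :
    rho j ℓ (tau j ℓ t) = t := by
  have E0 : 1*(2*ℓ+4) ≤ j*(2*ℓ+4) := Nat.mul_le_mul_right _ (by omega)
  have E1 : j*(2*ℓ+4) = (j-1)*(2*ℓ+4) + 1*(2*ℓ+4) := by rw [← add_mul]; congr 1; omega
  have E1' : (j-1)*(2*ℓ+4) = (j-2)*(2*ℓ+4) + 1*(2*ℓ+4) := by rw [← add_mul]; congr 1; omega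
  rcases le_or_gt t ℓ with h | h
  · rw [tau_low j ℓ t h, rho, if_neg (by omega), if_pos h]
  rcases eq_or_ne t (ℓ+1) with h2 | h2
  · rw [h2, tau_v, rho, if_pos rfl]
  obtain ⟨q, r, ht', hr, hq, hq2⟩ := decomp j ℓ t hj (by omega) ht
  have Htau := tau_eval j ℓ q r t ht' hr
  have E3 : q*(2*ℓ+4) ≤ (j-1)*(2*ℓ+4) := Nat.mul_le_mul_right _ hq
  rcases le_or_gt r (ℓ+1) with hr1 | hr1
  · rcases le_or_gt q (j-2) with hq1 | hq1
    · -- up run: tau t = t+ℓ+1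
      rw [Htau, if_pos hr1, if_pos hq1]
      have Eq1 : (q+1)*(2*ℓ+4) = q*(2*ℓ+4)+1*(2*ℓ+4) := by rw [← add_mul]
      have F1 : (q+1)*(2*ℓ+4) ≤ (j-1)*(2*ℓ+4) := Nat.mul_le_mul_right _ (by omega)
      rcases Nat.eq_zero_or_pos r with hr0 | hr0
      · rw [rho_eval j ℓ q (2*ℓ+3) (t+ℓ+1) (by omega) (by omega) (by omega) (by omega),
          if_pos (Or.inr rfl), if_neg (by omega)]
        omega
      · rw [rho_eval j ℓ (q+1) (r-1) (t+ℓ+1) (by omega) (by omega) (by omega) (by omega),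
          if_pos (Or.inl (by omega)), if_neg (by omega)]
        omega
    · -- final down run: tau t = qM+2ℓ+2-r with q = j-1
      have hqe : q = j-1 := by omega
      subst hqe
      rw [Htau, if_pos hr1, if_neg (by omega)]
      rw [rho_eval j ℓ (j-1) (2*ℓ+2-r) ((j-1)*(2*ℓ+4)+2*ℓ+2-r) (by omega) (by omega)
          (by omega) (by omega),
        if_neg (by omega), if_neg (by omega), if_neg (by omega)]
      omega
  · rcases le_or_gt q (j-3) with hq1 | hq1
    · -- middle down run: tau t = qM+3ℓ+4-r
      rw [Htau, if_neg (by omega), if_pos hq1]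
      rw [rho_eval j ℓ q (3*ℓ+4-r) (q*(2*ℓ+4)+3*ℓ+4-r) (by omega) (by omega)
          (by omega) (by omega),
        if_neg (by omega), if_pos hq1]
      omega
    · rcases le_or_gt q (j-2) with hq2' | hq2'
      · -- up2 run: q = j-2, tau t = t-ℓ-3
        have hqe : q = j-2 := by omega
        subst hqe
        rw [Htau, if_neg (by omega), if_neg (by omega), if_pos rfl]
        rw [rho_eval j ℓ (j-2) (r-1) (t-ℓ-3) (by omega) (by omega) (by omega) (by omega),
          if_neg (by omega), if_neg (by omega), if_pos rfl]
        omega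
      · -- q = j-1: tau t = t-1 (final up run)
        have hqe : q = j-1 := by omega
        subst hqe
        have hr2 : r ≤ 2*ℓ+2 := hq2 rfl
        rw [Htau, if_neg (by omega), if_neg (by omega), if_neg (by omega)]
        rcases le_or_gt r (ℓ+2) with hc | hc
        · -- r = ℓ+2 : x = (j-1)M + 2ℓ+3
          rw [rho_eval j ℓ (j-1) (2*ℓ+3) (t-1) (by omega) (by omega) (by omega) (by omega),
            if_pos (Or.inr rfl), if_pos (by omega)]
          omega
        · -- r ≥ ℓ+3 : x = jM + (r-ℓ-3)
          rw [rho_eval j ℓ j (r-ℓ-3) (t-1) (by omega) (by omega) (by omega) (by omega),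
            if_pos (Or.inl (by omega)), if_pos (by omega)]
          omega

end AbsAux

namespace AbsAux

open RandomGraphs

def AugRel (j ℓ : ℕ) (x y : ℕ) : Prop :=
  (x + 1 = y ∧ y < absSpineLen j ℓ ∧
      ¬ ∃ i, 1 ≤ i ∧ i ≤ j ∧ (x = aJ1 ℓ i ∨ x = bJ1 ℓ i)) ∨
  absExtraRel j ℓ x y

lemma augPath_adj {j ℓ : ℕ} (u v : Fin (absSpineLen j ℓ + 1)) :
    (absAugPath j ℓ).Adj u v ↔ u ≠ v ∧ (AugRel j ℓ ↑u ↑v ∨ AugRel j ℓ ↑v ↑u) :=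
  SimpleGraph.fromRel_adj _ u v

lemma tau_adj (j ℓ : ℕ) (hj : 3 ≤ j) (hℓ : 4 ≤ ℓ) (t : ℕ) (ht : t < j*(2*ℓ+4)+ℓ) :
    tau j ℓ t ≠ tau j ℓ (t+1) ∧
      (AugRel j ℓ (tau j ℓ t) (tau j ℓ (t+1)) ∨
        AugRel j ℓ (tau j ℓ (t+1)) (tau j ℓ t)) := by
  have E0 : 1*(2*ℓ+4) ≤ j*(2*ℓ+4) := Nat.mul_le_mul_right _ (by omega)
  have E1 : j*(2*ℓ+4) = (j-1)*(2*ℓ+4) + 1*(2*ℓ+4) := by rw [← add_mul]; congr 1; omega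
  have E1' : (j-1)*(2*ℓ+4) = (j-2)*(2*ℓ+4) + 1*(2*ℓ+4) := by rw [← add_mul]; congr 1; omega
  have hsl : absSpineLen j ℓ = j*(2*ℓ+4)+ℓ := rfl
  rcases lt_or_ge t ℓ with h | h
  · -- first run
    rw [tau_low j ℓ t (by omega), tau_low j ℓ (t+1) (by omega)]
    refine ⟨by omega, Or.inl (Or.inl ⟨rfl, by rw [hsl]; omega, ?_⟩)⟩
    exact NB_of (by omega) (by omega) (by omega)
      (show t = 0*(2*ℓ+4)+t by simp)
  rcases eq_or_ne t ℓ with h2 | h2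
  · -- a_{1,1} -- v
    rw [h2, tau_low j ℓ ℓ le_rfl, tau_v]
    refine ⟨by omega, Or.inr (Or.inr (Or.inl ⟨hsl.symm, Or.inl ?_⟩))⟩
    simp [aJ1]
  rcases eq_or_ne t (ℓ+1) with h2' | h2'
  · -- v -- b_{1,2}
    rw [h2', tau_v, tau_eval j ℓ 0 0 (ℓ+1+1) (by simp) (by omega), if_pos (by omega),
      if_pos (by omega)]
    refine ⟨by omega, Or.inl (Or.inr (Or.inl ⟨hsl.symm, Or.inr ?_⟩))⟩
    have hb : bJ2 ℓ 1 = 2*ℓ+3 := by simp [bJ2]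
    rw [hb]; omega
  -- main part
  obtain ⟨q, r, ht', hr, hq, hq2⟩ := decomp j ℓ t hj (by omega) (by omega)
  have hlast : q = j-1 → r ≤ 2*ℓ+1 := by
    intro hqq; rw [hqq] at ht'; omega
  have Htau := tau_eval j ℓ q r t ht' hr
  have E3 : q*(2*ℓ+4) ≤ (j-1)*(2*ℓ+4) := Nat.mul_le_mul_right _ hq
  have Eq1 : (q+1)*(2*ℓ+4) = q*(2*ℓ+4)+1*(2*ℓ+4) := by rw [← add_mul]
  rcases le_or_gt q (j-2) with hq1 | hq1
  · -- q ≤ j-2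
    have F1 : (q+1)*(2*ℓ+4) ≤ (j-1)*(2*ℓ+4) := Nat.mul_le_mul_right _ (by omega)
    rcases le_or_gt r ℓ with hrA | hrA
    · -- A1 : spine edge inside an up run
      rw [Htau, if_pos (by omega), if_pos hq1,
        tau_eval j ℓ q (r+1) (t+1) (by omega) (by omega), if_pos (by omega), if_pos hq1]
      refine ⟨by omega, Or.inl (Or.inl ⟨by omega, by rw [hsl]; omega, ?_⟩)⟩
      rcases Nat.eq_zero_or_pos r with hr0 | hr0
      · exact NB_of (by omega) (by omega) (by omega)
          (show t+ℓ+1 = q*(2*ℓ+4)+(2*ℓ+3) by omega)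
      · exact NB_of (show r-1 < 2*ℓ+4 by omega) (by omega) (by omega)
          (show t+ℓ+1 = (q+1)*(2*ℓ+4)+(r-1) by omega)
    rcases eq_or_ne r (ℓ+1) with hrB | hrB
    · -- A2 : t at a_{i+1,1}-position
      subst hrB
      rw [Htau, if_pos le_rfl, if_pos hq1,
        tau_eval j ℓ q (ℓ+2) (t+1) (by omega) (by omega), if_neg (by omega)]
      rcases le_or_gt q (j-3) with hqc | hqc
      · rw [if_pos hqc]
        refine ⟨by omega, Or.inr (Or.inr (Or.inr (Or.inl ⟨q+1, by omega, by omega, Or.inr ⟨?_, ?_⟩⟩)))⟩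
        · simp only [bJ1, Nat.add_sub_cancel]; omega
        · simp only [aJ1, Nat.add_sub_cancel]; omega
      · have hqe : q = j-2 := by omega
        subst hqe
        rw [if_neg (by omega), if_pos rfl]
        refine ⟨by omega, Or.inr (Or.inr (Or.inr (Or.inr (Or.inr (Or.inl ⟨?_, ?_⟩)))))⟩
        · simp only [aJ2, show j-1-1 = j-2 from by omega]; omega
        · simp only [aJ1]; omega
    rcases le_or_gt r (2*ℓ+2) with hrC | hrC
    · -- A3/A4 : spine edge inside middle run
      rcases le_or_gt q (j-3) with hqc | hqc
      · -- A3 : down run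
        rw [Htau, if_neg (by omega), if_pos hqc,
          tau_eval j ℓ q (r+1) (t+1) (by omega) (by omega), if_neg (by omega), if_pos hqc]
        refine ⟨by omega, Or.inr (Or.inl ⟨by omega, by rw [hsl]; omega, ?_⟩)⟩
        exact NB_of (show 3*ℓ+4-(r+1) < 2*ℓ+4 by omega) (by omega) (by omega)
          (show q*(2*ℓ+4)+3*ℓ+4-(r+1) = q*(2*ℓ+4)+(3*ℓ+4-(r+1)) by omega)
      · -- A4 : up2 run, q = j-2
        have hqe : q = j-2 := by omega
        subst hqe
        rw [Htau, if_neg (by omega), if_neg (by omega), if_pos rfl,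
          tau_eval j ℓ (j-2) (r+1) (t+1) (by omega) (by omega), if_neg (by omega),
          if_neg (by omega), if_pos rfl]
        refine ⟨by omega, Or.inl (Or.inl ⟨by omega, by rw [hsl]; omega, ?_⟩)⟩
        exact NB_of (show r-1 < 2*ℓ+4 by omega) (by omega) (by omega)
          (show t-ℓ-3 = (j-2)*(2*ℓ+4)+(r-1) by omega)
    · -- r = 2ℓ+3 : A5/A6
      have hrD : r = 2*ℓ+3 := by omega
      subst hrD
      rcases le_or_gt q (j-3) with hqc | hqc
      · -- A5 : a_{q+1,2} -- b_{q+2,2}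
        rw [Htau, if_neg (by omega), if_pos hqc,
          tau_eval j ℓ (q+1) 0 (t+1) (by omega) (by omega), if_pos (by omega),
          if_pos (by omega)]
        refine ⟨by omega, Or.inl (Or.inr (Or.inr (Or.inl ⟨q+1, by omega, by omega,
          Or.inl ⟨?_, ?_⟩⟩)))⟩
        · simp only [aJ2, Nat.add_sub_cancel]; omega
        · simp only [bJ2, Nat.add_sub_cancel]; omega
      · -- A6 : b_{j-1,1} -- b_{j,1}
        have hqe : q = j-2 := by omega
        subst hqe
        rw [Htau, if_neg (by omega), if_neg (by omega), if_pos rfl,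
          tau_eval j ℓ (j-1) 0 (t+1) (by omega) (by omega), if_pos (by omega),
          if_neg (by omega)]
        refine ⟨by omega, Or.inl (Or.inr (Or.inr (Or.inr (Or.inr (Or.inr ⟨?_, ?_⟩)))))⟩
        · simp only [bJ1, show j-1-1 = j-2 from by omega]; omega
        · simp only [bJ1]; omega
  · -- q = j-1
    have hqe : q = j-1 := by omega
    subst hqe
    have hr2 : r ≤ 2*ℓ+1 := hlast rfl
    rcases le_or_gt r ℓ with hrA | hrA
    · -- B1 : spine edge inside final down run
      rw [Htau, if_pos (by omega), if_neg (by omega),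
        tau_eval j ℓ (j-1) (r+1) (t+1) (by omega) (by omega), if_pos (by omega),
        if_neg (by omega)]
      refine ⟨by omega, Or.inr (Or.inl ⟨by omega, by rw [hsl]; omega, ?_⟩)⟩
      exact NB_of (show 2*ℓ+2-(r+1) < 2*ℓ+4 by omega) (by omega) (by omega)
        (show (j-1)*(2*ℓ+4)+2*ℓ+2-(r+1) = (j-1)*(2*ℓ+4)+(2*ℓ+2-(r+1)) by omega)
    rcases eq_or_ne r (ℓ+1) with hrB | hrB
    · -- B2 : a_{j,2} -- b_{j,2}
      subst hrB
      rw [Htau, if_pos le_rfl, if_neg (by omega),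
        tau_eval j ℓ (j-1) (ℓ+2) (t+1) (by omega) (by omega), if_neg (by omega),
        if_neg (by omega), if_neg (by omega)]
      refine ⟨by omega, Or.inl (Or.inr (Or.inr (Or.inr (Or.inl ⟨?_, ?_⟩))))⟩
      · simp only [aJ2]; omega
      · simp only [bJ2]; omega
    · -- B3 : spine edge inside final up run
      rw [Htau, if_neg (by omega), if_neg (by omega), if_neg (by omega),
        tau_eval j ℓ (j-1) (r+1) (t+1) (by omega) (by omega), if_neg (by omega),
        if_neg (by omega), if_neg (by omega)]
      refine ⟨by omega, Or.inl (Or.inl ⟨by omega, by rw [hsl]; omega, ?_⟩)⟩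
      rcases le_or_gt r (ℓ+2) with hc | hc
      · exact NB_of (show 2*ℓ+3 < 2*ℓ+4 by omega) (by omega) (by omega)
          (show t-1 = (j-1)*(2*ℓ+4)+(2*ℓ+3) by omega)
      · exact NB_of (show r-ℓ-3 < 2*ℓ+4 by omega) (by omega) (by omega)
          (show t-1 = j*(2*ℓ+4)+(r-ℓ-3) by omega)

end AbsAux

namespace AbsAux

open RandomGraphs

/-! ### Generic walk construction -/

def mkWalk {V : Type*} {G : SimpleGraph V} (f : ℕ → V) :
    (m : ℕ) → (∀ t, t < m → G.Adj (f t) (f (t+1))) → G.Walk (f 0) (f m)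
  | 0, _ => SimpleGraph.Walk.nil
  | m+1, h => (mkWalk f m (fun t ht => h t (by omega))).concat (h m (by omega))

lemma mkWalk_support {V : Type*} {G : SimpleGraph V} (f : ℕ → V) :
    ∀ (m : ℕ) (h : ∀ t, t < m → G.Adj (f t) (f (t+1))),
      (mkWalk f m h).support = (List.range (m+1)).map f := by
  intro m
  induction m with
  | zero => intro h; simp [mkWalk, show List.range 1 = [0] from rfl]
  | succ m ih =>
      intro h
      simp only [mkWalk, SimpleGraph.Walk.support_concat, ih, List.range_succ]
      simp

lemma mkWalk_edges {V : Type*} {G : SimpleGraph V} (f : ℕ → V) :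
    ∀ (m : ℕ) (h : ∀ t, t < m → G.Adj (f t) (f (t+1))),
      (mkWalk f m h).edges = (List.range m).map (fun t => s(f t, f (t+1))) := by
  intro m
  induction m with
  | zero => intro h; simp [mkWalk, show List.range 1 = [0] from rfl]
  | succ m ih =>
      intro h
      simp only [mkWalk, SimpleGraph.Walk.edges_concat, ih, List.range_succ]
      simp

/-! ### Vertex embedding -/

def fm (j ℓ : ℕ) (a : ℕ) : Fin (absSpineLen j ℓ + 1) :=
  ⟨a % (absSpineLen j ℓ + 1), Nat.mod_lt _ (Nat.succ_pos _)⟩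

lemma fm_val (j ℓ a : ℕ) (h : a ≤ absSpineLen j ℓ) : (fm j ℓ a : ℕ) = a :=
  Nat.mod_eq_of_lt (by omega)

lemma fm_eq (j ℓ : ℕ) (x : Fin (absSpineLen j ℓ + 1)) {a : ℕ} (h : (x:ℕ) = a) :
    x = fm j ℓ a := by
  have hx := x.isLt
  apply Fin.ext
  rw [fm_val j ℓ a (by omega)]
  exact h

/-! ### Candidate edge sets -/

open scoped Classical in
noncomputable def candSpine (j ℓ : ℕ) : Finset (Sym2 (Fin (absSpineLen j ℓ + 1))) :=
  ((Finset.range (absSpineLen j ℓ - 1)).filter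
      (fun u => ¬ ∃ i, 1 ≤ i ∧ i ≤ j ∧ (u = aJ1 ℓ i ∨ u = bJ1 ℓ i))).image
    (fun u => s(fm j ℓ u, fm j ℓ (u+1)))

def cand5 (j ℓ : ℕ) : Finset (Sym2 (Fin (absSpineLen j ℓ + 1))) :=
  [s(fm j ℓ (absSpineLen j ℓ), fm j ℓ (aJ1 ℓ 1)),
   s(fm j ℓ (absSpineLen j ℓ), fm j ℓ (bJ2 ℓ 1)),
   s(fm j ℓ (aJ2 ℓ j), fm j ℓ (bJ2 ℓ j)),
   s(fm j ℓ (aJ2 ℓ (j-1)), fm j ℓ (aJ1 ℓ j)),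
   s(fm j ℓ (bJ1 ℓ (j-1)), fm j ℓ (bJ1 ℓ j))].toFinset

def candE1 (j ℓ : ℕ) : Finset (Sym2 (Fin (absSpineLen j ℓ + 1))) :=
  (Finset.range (j-2)).image (fun i => s(fm j ℓ (aJ2 ℓ (i+1)), fm j ℓ (bJ2 ℓ (i+1+1))))

def candE2 (j ℓ : ℕ) : Finset (Sym2 (Fin (absSpineLen j ℓ + 1))) :=
  (Finset.range (j-2)).image (fun i => s(fm j ℓ (bJ1 ℓ (i+1)), fm j ℓ (aJ1 ℓ (i+1+1))))

noncomputable def cand (j ℓ : ℕ) : Finset (Sym2 (Fin (absSpineLen j ℓ + 1))) :=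
  candSpine j ℓ ∪ cand5 j ℓ ∪ candE1 j ℓ ∪ candE2 j ℓ

lemma cover (j ℓ : ℕ) (hj : 3 ≤ j) (hℓ : 4 ≤ ℓ) (a b : Fin (absSpineLen j ℓ + 1))
    (hrel : AugRel j ℓ ↑a ↑b) : s(a, b) ∈ cand j ℓ := by
  classical
  rcases hrel with ⟨hab, hbs, hnb⟩ | hex
  · refine Finset.mem_union_left _ (Finset.mem_union_left _ (Finset.mem_union_left _ ?_))
    have ha : fm j ℓ (a:ℕ) = a := (fm_eq j ℓ a rfl).symm
    have hb : fm j ℓ ((a:ℕ)+1) = b := (fm_eq j ℓ b hab.symm).symm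
    refine Finset.mem_image.2 ⟨(a:ℕ), Finset.mem_filter.2 ⟨Finset.mem_range.2 (by omega), hnb⟩, ?_⟩
    rw [ha, hb]
  · rcases hex with ⟨hx, hy | hy⟩ | ⟨i, hi1, hi2, ⟨hx, hy⟩ | ⟨hx, hy⟩⟩ |
      ⟨hx, hy⟩ | ⟨hx, hy⟩ | ⟨hx, hy⟩
    · refine Finset.mem_union_left _ (Finset.mem_union_left _ (Finset.mem_union_right _ ?_))
      rw [fm_eq j ℓ a hx, fm_eq j ℓ b hy]
      simp [cand5]
    · refine Finset.mem_union_left _ (Finset.mem_union_left _ (Finset.mem_union_right _ ?_))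
      rw [fm_eq j ℓ a hx, fm_eq j ℓ b hy]
      simp [cand5]
    · refine Finset.mem_union_left _ (Finset.mem_union_right _ ?_)
      rw [fm_eq j ℓ a hx, fm_eq j ℓ b hy]
      refine Finset.mem_image.2 ⟨i-1, Finset.mem_range.2 (by omega), ?_⟩
      rw [show i-1+1 = i from by omega]
    · refine Finset.mem_union_right _ ?_
      rw [fm_eq j ℓ a hx, fm_eq j ℓ b hy]
      refine Finset.mem_image.2 ⟨i-1, Finset.mem_range.2 (by omega), ?_⟩
      rw [show i-1+1 = i from by omega]
    · refine Finset.mem_union_left _ (Finset.mem_union_left _ (Finset.mem_union_right _ ?_))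
      rw [fm_eq j ℓ a hx, fm_eq j ℓ b hy]
      simp [cand5]
    · refine Finset.mem_union_left _ (Finset.mem_union_left _ (Finset.mem_union_right _ ?_))
      rw [fm_eq j ℓ a hx, fm_eq j ℓ b hy]
      simp [cand5]
    · refine Finset.mem_union_left _ (Finset.mem_union_left _ (Finset.mem_union_right _ ?_))
      rw [fm_eq j ℓ a hx, fm_eq j ℓ b hy]
      simp [cand5]

open scoped Classical in
lemma cand_card (j ℓ : ℕ) (hj : 3 ≤ j) (hℓ : 4 ≤ ℓ) :
    (cand j ℓ).card ≤ absSpineLen j ℓ := by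
  have hsl : absSpineLen j ℓ = j*(2*ℓ+4)+ℓ := rfl
  have hj12 : j*12 ≤ j*(2*ℓ+4) := Nat.mul_le_mul_left j (by omega)
  have h5 : (cand5 j ℓ).card ≤ 5 := (List.toFinset_card_le _).trans (by simp)
  have hE1c : (candE1 j ℓ).card ≤ j-2 := Finset.card_image_le.trans (by simp)
  have hE2c : (candE2 j ℓ).card ≤ j-2 := Finset.card_image_le.trans (by simp)
  have hBcard : 2*j ≤ ((Finset.range (absSpineLen j ℓ - 1)).filter
      (fun u => ∃ i, 1 ≤ i ∧ i ≤ j ∧ (u = aJ1 ℓ i ∨ u = bJ1 ℓ i))).card := by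
    have hinj1 : Function.Injective (fun i : ℕ => i*(2*ℓ+4)+ℓ) := by
      intro x y h
      exact (mul_cancel_aux (show ℓ < 2*ℓ+4 by omega) (show ℓ < 2*ℓ+4 by omega) h).1
    have hinj2 : Function.Injective (fun i : ℕ => i*(2*ℓ+4)+(2*ℓ+2)) := by
      intro x y h
      exact (mul_cancel_aux (show 2*ℓ+2 < 2*ℓ+4 by omega) (show 2*ℓ+2 < 2*ℓ+4 by omega) h).1
    have hdisj : Disjoint ((Finset.range j).image (fun i => i*(2*ℓ+4)+ℓ))
        ((Finset.range j).image (fun i => i*(2*ℓ+4)+(2*ℓ+2))) := by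
      rw [Finset.disjoint_left]
      intro x h1 h2
      obtain ⟨i1, -, he1⟩ := Finset.mem_image.1 h1
      obtain ⟨i2, -, he2⟩ := Finset.mem_image.1 h2
      have := (mul_cancel_aux (show ℓ < 2*ℓ+4 by omega) (show 2*ℓ+2 < 2*ℓ+4 by omega)
        (he1.trans he2.symm)).2
      omega
    have hsub : ((Finset.range j).image (fun i => i*(2*ℓ+4)+ℓ)) ∪
        ((Finset.range j).image (fun i => i*(2*ℓ+4)+(2*ℓ+2))) ⊆
        (Finset.range (absSpineLen j ℓ - 1)).filter
          (fun u => ∃ i, 1 ≤ i ∧ i ≤ j ∧ (u = aJ1 ℓ i ∨ u = bJ1 ℓ i)) := by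
      intro x hx
      rcases Finset.mem_union.1 hx with h | h
      · obtain ⟨i, hir, hie⟩ := Finset.mem_image.1 h
        rw [Finset.mem_range] at hir
        have hm := mul_step (2*ℓ+4) (show i+1 ≤ j from by omega)
        refine Finset.mem_filter.2 ⟨Finset.mem_range.2 (by omega), i+1, by omega, by omega,
          Or.inl ?_⟩
        rw [aJ1_eval]; omega
      · obtain ⟨i, hir, hie⟩ := Finset.mem_image.1 h
        rw [Finset.mem_range] at hir
        have hm := mul_step (2*ℓ+4) (show i+1 ≤ j from by omega)
        refine Finset.mem_filter.2 ⟨Finset.mem_range.2 (by omega), i+1, by omega, by omega,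
          Or.inr ?_⟩
        rw [bJ1_eval]; omega
    calc 2*j = (((Finset.range j).image (fun i => i*(2*ℓ+4)+ℓ)) ∪
        ((Finset.range j).image (fun i => i*(2*ℓ+4)+(2*ℓ+2)))).card := by
          rw [Finset.card_union_of_disjoint hdisj,
            Finset.card_image_of_injective _ hinj1,
            Finset.card_image_of_injective _ hinj2, Finset.card_range]
          ring
      _ ≤ _ := Finset.card_le_card hsub
  have hkey := Finset.card_filter_add_card_filter_not
    (s := Finset.range (absSpineLen j ℓ - 1))
    (p := fun u => ∃ i, 1 ≤ i ∧ i ≤ j ∧ (u = aJ1 ℓ i ∨ u = bJ1 ℓ i))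
  rw [Finset.card_range] at hkey
  have hspine : (candSpine j ℓ).card ≤ (absSpineLen j ℓ - 1) - 2*j := by
    refine Finset.card_image_le.trans ?_
    omega
  have := Finset.card_union_le (candSpine j ℓ ∪ cand5 j ℓ ∪ candE1 j ℓ) (candE2 j ℓ)
  have := Finset.card_union_le (candSpine j ℓ ∪ cand5 j ℓ) (candE1 j ℓ)
  have := Finset.card_union_le (candSpine j ℓ) (cand5 j ℓ)
  rw [cand]
  omega

end AbsAux

/-- Let `k ≥ 2`, `j ≥ 3` and `ℓ ≥ 2k`. The graph `P'` obtained from the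
skeleton of the `(j,ℓ,k)`-absorber by deleting the edges `a_{i,1}a_{i,2}` and
`b_{i,1}b_{i,2}` (for all `i = 1,…,j`) is a path with vertex set `V(P) ∪ {v}` whose
endvertices are the endvertices `0` and `s-1` of the spine `P`.  Formally: there is a
Hamiltonian path `w` in `absAugPath j ℓ` from `0` to `s-1` whose edges are exactly the
edges of `absAugPath j ℓ`. -/
theorem augmented_path_is_path (k j ℓ : ℕ) (hk : 2 ≤ k) (hj : 3 ≤ j) (hℓ : 2 * k ≤ ℓ) :
    ∃ w : (absAugPath j ℓ).Walk
        ⟨0, Nat.succ_pos _⟩ ⟨absSpineLen j ℓ - 1, by omega⟩,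
      w.IsPath ∧ w.IsHamiltonian ∧
      ∀ e, e ∈ (absAugPath j ℓ).edgeSet ↔ e ∈ w.edges := by
  classical
  have hℓ4 : 4 ≤ ℓ := by omega
  have hsl : absSpineLen j ℓ = j*(2*ℓ+4)+ℓ := rfl
  set N := j*(2*ℓ+4)+ℓ with hN
  let f : ℕ → Fin (absSpineLen j ℓ + 1) := fun t => AbsAux.fm j ℓ (AbsAux.tau j ℓ t)
  have hfval : ∀ t, t ≤ N → (f t : ℕ) = AbsAux.tau j ℓ t := fun t ht =>
    AbsAux.fm_val j ℓ _ (by rw [hsl]; exact AbsAux.tau_le j ℓ hj hℓ4 t ht)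
  have hadj : ∀ t, t < N → (absAugPath j ℓ).Adj (f t) (f (t+1)) := by
    intro t ht
    obtain ⟨hne, hrel⟩ := AbsAux.tau_adj j ℓ hj hℓ4 t ht
    rw [AbsAux.augPath_adj]
    constructor
    · intro hcon
      apply hne
      rw [← hfval t (by omega), ← hfval (t+1) (by omega), hcon]
    · rw [hfval t (by omega), hfval (t+1) (by omega)]
      exact hrel
  let w0 := AbsAux.mkWalk f N hadj
  have hf0 : f 0 = ⟨0, Nat.succ_pos _⟩ := by
    apply Fin.ext
    rw [hfval 0 (by omega), AbsAux.tau_zero]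
  have hfN : f N = ⟨absSpineLen j ℓ - 1, by omega⟩ := by
    apply Fin.ext
    rw [hfval N le_rfl]
    show AbsAux.tau j ℓ (j*(2*ℓ+4)+ℓ) = absSpineLen j ℓ - 1
    rw [AbsAux.tau_last j ℓ hj hℓ4, hsl]
  have hsup : w0.support = (List.range (N+1)).map f := AbsAux.mkWalk_support f N hadj
  have hnodup : w0.support.Nodup := by
    rw [hsup]
    refine List.Nodup.map_on ?_ List.nodup_range
    intro x hx y hy hxy
    rw [List.mem_range] at hx hy
    have h1 : AbsAux.tau j ℓ x = AbsAux.tau j ℓ y := by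
      rw [← hfval x (by omega), ← hfval y (by omega), hxy]
    have h2 := congrArg (AbsAux.rho j ℓ) h1
    rwa [AbsAux.rho_tau j ℓ hj hℓ4 x (by omega), AbsAux.rho_tau j ℓ hj hℓ4 y (by omega)] at h2
  have hpath0 : w0.IsPath := SimpleGraph.Walk.IsPath.mk' hnodup
  have hedges : w0.edges = (List.range N).map (fun t => s(f t, f (t+1))) :=
    AbsAux.mkWalk_edges f N hadj
  have hTnodup : w0.edges.Nodup := hpath0.isTrail.edges_nodup
  have hcover : ∀ e ∈ (absAugPath j ℓ).edgeSet, e ∈ AbsAux.cand j ℓ := by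
    intro e he
    induction e using Sym2.ind with
    | _ x y =>
      rw [SimpleGraph.mem_edgeSet, AbsAux.augPath_adj] at he
      rcases he.2 with h | h
      · exact AbsAux.cover j ℓ hj hℓ4 x y h
      · rw [Sym2.eq_swap]; exact AbsAux.cover j ℓ hj hℓ4 y x h
  have hTcard : w0.edges.toFinset.card = N := by
    rw [List.toFinset_card_of_nodup hTnodup, hedges]
    simp
  have hTC : w0.edges.toFinset ⊆ AbsAux.cand j ℓ := fun e he =>
    hcover e (w0.edges_subset_edgeSet (List.mem_toFinset.1 he))
  have hEq : w0.edges.toFinset = AbsAux.cand j ℓ :=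
    Finset.eq_of_subset_of_card_le hTC
      (by rw [hTcard]; exact le_of_le_of_eq (AbsAux.cand_card j ℓ hj hℓ4) hsl)
  refine ⟨w0.copy hf0 hfN, ?_, ?_, ?_⟩
  · apply SimpleGraph.Walk.IsPath.mk'
    rw [SimpleGraph.Walk.support_copy]
    exact hnodup
  · intro v
    rw [SimpleGraph.Walk.support_copy]
    refine List.count_eq_one_of_mem hnodup ?_
    have hto : w0.support.toFinset = Finset.univ := by
      apply Finset.eq_univ_of_card
      rw [List.toFinset_card_of_nodup hnodup, hsup]
      simp [hsl]
    have : v ∈ w0.support.toFinset := by rw [hto]; exact Finset.mem_univ v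
    exact List.mem_toFinset.1 this
  · intro e
    rw [SimpleGraph.Walk.edges_copy]
    constructor
    · intro he
      have h1 : e ∈ w0.edges.toFinset := by rw [hEq]; exact hcover e he
      exact List.mem_toFinset.1 h1
    · intro he
      exact w0.edges_subset_edgeSet he
end

section
/- Let k ≥ 2, j ≥ 3 and ℓ ≥ 2k, and consider the skeleton of the (j,ℓ,k)-absorber with spine P and absorption vertex v. Then the graph consisting of all junction edges, of the path a_{1,1} v b_{1,2}, and of all the edges a_{i,1}a_{i,2} and b_{i,1}b_{i,2} (for all i = 1,…,j) is a cycle. -/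
open Filter

open RandomGraphs


namespace RandomGraphs

/-- The graph `D` consisting of all junction edges, of the path `a_{1,1} v b_{1,2}`, and
of all the edges `a_{i,1}a_{i,2}` and `b_{i,1}b_{i,2}` (for all `i = 1,…,j`). -/
def absJunctionGraph (j ℓ : ℕ) : SimpleGraph (Fin (absSpineLen j ℓ + 1)) :=
  SimpleGraph.fromRel (fun u v =>
    absExtraRel j ℓ u v ∨
    ∃ i, 1 ≤ i ∧ i ≤ j ∧
      (((u : ℕ) = aJ1 ℓ i ∧ (v : ℕ) = aJ2 ℓ i) ∨
       ((u : ℕ) = bJ1 ℓ i ∧ (v : ℕ) = bJ2 ℓ i)))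

end RandomGraphs

namespace AbsCycleAux

open RandomGraphs

def pos (ℓ i o : ℕ) : ℕ := (i - 1) * (2 * ℓ + 4) + o

lemma aJ1_pos (ℓ i : ℕ) : aJ1 ℓ i = pos ℓ i ℓ := rfl
lemma aJ2_pos (ℓ i : ℕ) : aJ2 ℓ i = pos ℓ i (ℓ + 1) := by unfold aJ2 pos; ring
lemma bJ1_pos (ℓ i : ℕ) : bJ1 ℓ i = pos ℓ i (2 * ℓ + 2) := by unfold bJ1 pos; ring
lemma bJ2_pos (ℓ i : ℕ) : bJ2 ℓ i = pos ℓ i (2 * ℓ + 3) := by unfold bJ2 pos; ring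

lemma pos_inj {ℓ i i' o o' : ℕ} (hi : 1 ≤ i) (hi' : 1 ≤ i') (ho : o < 2 * ℓ + 4)
    (ho' : o' < 2 * ℓ + 4) (h : pos ℓ i o = pos ℓ i' o') : i = i' ∧ o = o' := by
  have hm : 0 < 2 * ℓ + 4 := by omega
  have e1 : o + (i - 1) * (2 * ℓ + 4) = o' + (i' - 1) * (2 * ℓ + 4) := by
    unfold pos at h
    rw [Nat.add_comm o, Nat.add_comm o']; exact h
  have d := congrArg (· / (2 * ℓ + 4)) e1
  have m2 := congrArg (· % (2 * ℓ + 4)) e1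
  simp only [Nat.add_mul_div_right _ _ hm, Nat.add_mul_mod_self_right] at d m2
  rw [Nat.div_eq_of_lt ho, Nat.div_eq_of_lt ho'] at d
  rw [Nat.mod_eq_of_lt ho, Nat.mod_eq_of_lt ho'] at m2
  omega

lemma pos_ne {ℓ i i' o o' : ℕ} (hi : 1 ≤ i) (hi' : 1 ≤ i') (ho : o < 2 * ℓ + 4)
    (ho' : o' < 2 * ℓ + 4) (h : ¬(i = i' ∧ o = o')) : pos ℓ i o ≠ pos ℓ i' o' :=
  fun he => h (pos_inj hi hi' ho ho' he)

lemma pos_lt {j ℓ i o : ℕ} (h1 : 1 ≤ i) (h2 : i ≤ j) (ho : o < 2 * ℓ + 4) :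
    pos ℓ i o < absSpineLen j ℓ := by
  obtain ⟨n, rfl⟩ : ∃ n, i = n + 1 := ⟨i - 1, by omega⟩
  have e : (n + 1) * (2 * ℓ + 4) = n * (2 * ℓ + 4) + (2 * ℓ + 4) := by ring
  have h3 : (n + 1) * (2 * ℓ + 4) ≤ j * (2 * ℓ + 4) := Nat.mul_le_mul_right _ h2
  have : pos ℓ (n + 1) o = n * (2 * ℓ + 4) + o := by unfold pos; simp
  unfold absSpineLen
  linarith



def sEdges {α : Type*} : List α → List (Sym2 α)
  | x :: y :: l => s(x, y) :: sEdges (y :: l)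
  | _ => []

@[simp] lemma sEdges_nil {α : Type*} : sEdges ([] : List α) = [] := rfl
@[simp] lemma sEdges_single {α : Type*} (x : α) : sEdges [x] = [] := rfl
@[simp] lemma sEdges_cons_cons {α : Type*} (x y : α) (l : List α) :
    sEdges (x :: y :: l) = s(x, y) :: sEdges (y :: l) := rfl

lemma sEdges_mem {α : Type*} : ∀ (l : List α) (a : α) (e : Sym2 α), e ∈ sEdges (a :: l) →
    ∃ x y, e = s(x, y) ∧ x ∈ a :: l ∧ y ∈ a :: l
  | [], _, _, h => by simp at h
  | b :: l, a, e, h => by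
    rcases List.mem_cons.mp h with h | h
    · exact ⟨a, b, h, by simp, by simp⟩
    · obtain ⟨x, y, he, hx, hy⟩ := sEdges_mem l b e h
      exact ⟨x, y, he, List.mem_cons_of_mem _ hx, List.mem_cons_of_mem _ hy⟩

lemma sEdges_append {α : Type*} : ∀ (l : List α) (a b : α) (l' : List α),
    sEdges (a :: (l ++ b :: l')) = sEdges (a :: (l ++ [b])) ++ sEdges (b :: l')
  | [], a, b, l' => by simp
  | x :: l, a, b, l' => by
    simp only [List.cons_append, sEdges_cons_cons]
    rw [sEdges_append l x b l']

lemma sEdges_map {α β : Type*} (f : α → β) : ∀ (l : List α) (a : α),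
    sEdges ((a :: l).map f) = (sEdges (a :: l)).map (Sym2.map f)
  | [], a => by simp
  | b :: l, a => by
    have ih := sEdges_map f l b
    simp only [List.map_cons, sEdges_cons_cons] at ih ⊢
    rw [ih, Sym2.map_pair_eq]

lemma sEdges_last {α : Type*} : ∀ (l : List α) (a b : α) (e : Sym2 α),
    e ∈ sEdges (a :: (l ++ [b])) → e ∈ sEdges (a :: l) ∨ e = s(l.getLastD a, b)
  | [], a, b, e, h => by simp at h ⊢; tauto
  | x :: l, a, b, e, h => by
    simp only [List.cons_append, sEdges_cons_cons, List.mem_cons] at h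
    rcases h with h | h
    · left; rw [sEdges_cons_cons]; exact List.mem_cons.mpr (Or.inl h)
    · rcases sEdges_last l x b e h with h' | h'
      · left; rw [sEdges_cons_cons]; exact List.mem_cons.mpr (Or.inr h')
      · right; rwa [List.getLastD_cons]

def mkWalk {V : Type*} (G : SimpleGraph V) :
    (a : V) → (l : List V) → (b : V) → List.Chain G.Adj a (l ++ [b]) → G.Walk a b
  | _, [], _, h => SimpleGraph.Walk.cons (List.chain_cons.mp h).1 SimpleGraph.Walk.nil
  | _, x :: l, b, h =>
    SimpleGraph.Walk.cons (List.chain_cons.mp h).1 (mkWalk G x l b (List.chain_cons.mp h).2)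

lemma mkWalk_support {V : Type*} (G : SimpleGraph V) :
    ∀ (a : V) (l : List V) (b : V) (h : List.Chain G.Adj a (l ++ [b])),
      (mkWalk G a l b h).support = a :: (l ++ [b])
  | a, [], b, h => by simp [mkWalk]
  | a, x :: l, b, h => by
    simp only [mkWalk, SimpleGraph.Walk.support_cons, mkWalk_support G x l b]
    simp
    exact mkWalk_support G x l b _

lemma mkWalk_edges {V : Type*} (G : SimpleGraph V) :
    ∀ (a : V) (l : List V) (b : V) (h : List.Chain G.Adj a (l ++ [b])),
      (mkWalk G a l b h).edges = sEdges (a :: (l ++ [b]))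
  | a, [], b, h => by simp [mkWalk]
  | a, x :: l, b, h => by
    simp only [mkWalk, SimpleGraph.Walk.edges_cons, mkWalk_edges G x l b]
    simp
    exact mkWalk_edges G x l b _


open RandomGraphs

def upEntry (j ℓ i : ℕ) : ℕ :=
  if i = 0 then absSpineLen j ℓ else if i % 2 = 1 then aJ1 ℓ i else bJ2 ℓ i
def upExit (j ℓ i : ℕ) : ℕ :=
  if i = 0 then absSpineLen j ℓ else if i % 2 = 1 then aJ2 ℓ i else bJ1 ℓ i
def dnEntry (j ℓ i : ℕ) : ℕ :=
  if i = 0 then absSpineLen j ℓ else if i % 2 = 1 then bJ1 ℓ i else aJ2 ℓ i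
def dnExit (j ℓ i : ℕ) : ℕ :=
  if i = 0 then absSpineLen j ℓ else if i % 2 = 1 then bJ2 ℓ i else aJ1 ℓ i

def seg (j ℓ : ℕ) : ℕ → List ℕ
  | 0 => if j % 2 = 1 then [bJ1 ℓ j, bJ2 ℓ j, aJ2 ℓ j, aJ1 ℓ j]
         else [aJ1 ℓ j, aJ2 ℓ j, bJ2 ℓ j, bJ1 ℓ j]
  | c + 1 => upEntry j ℓ (j-1-c) :: upExit j ℓ (j-1-c) ::
      (seg j ℓ c ++ [dnEntry j ℓ (j-1-c), dnExit j ℓ (j-1-c)])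

def relAll (j ℓ : ℕ) (x y : ℕ) : Prop :=
  absExtraRel j ℓ x y ∨
  ∃ i, 1 ≤ i ∧ i ≤ j ∧ ((x = aJ1 ℓ i ∧ y = aJ2 ℓ i) ∨ (x = bJ1 ℓ i ∧ y = bJ2 ℓ i))

lemma junction_adj_iff {j ℓ : ℕ} (u v : Fin (absSpineLen j ℓ + 1)) :
    (absJunctionGraph j ℓ).Adj u v ↔
      u ≠ v ∧ (relAll j ℓ ↑u ↑v ∨ relAll j ℓ ↑v ↑u) := by
  rw [absJunctionGraph, SimpleGraph.fromRel_adj, relAll, relAll]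

def Rfull (j ℓ : ℕ) (x y : ℕ) : Prop :=
  x ≠ y ∧ x ≤ absSpineLen j ℓ ∧ y ≤ absSpineLen j ℓ ∧
    (relAll j ℓ x y ∨ relAll j ℓ y x)

def toFin (j ℓ : ℕ) (x : ℕ) : Fin (absSpineLen j ℓ + 1) :=
  ⟨x % (absSpineLen j ℓ + 1), Nat.mod_lt _ (Nat.succ_pos _)⟩

lemma toFin_val {j ℓ x : ℕ} (h : x ≤ absSpineLen j ℓ) : (toFin j ℓ x : ℕ) = x :=
  Nat.mod_eq_of_lt (by omega)

lemma toFin_coe (j ℓ : ℕ) (u : Fin (absSpineLen j ℓ + 1)) : toFin j ℓ ↑u = u :=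
  Fin.ext (toFin_val (by omega))

lemma adj_of_Rfull {j ℓ x y : ℕ} (h : Rfull j ℓ x y) :
    (absJunctionGraph j ℓ).Adj (toFin j ℓ x) (toFin j ℓ y) := by
  obtain ⟨hne, hx, hy, hr⟩ := h
  rw [junction_adj_iff]
  constructor
  · intro hc
    apply hne
    have := congrArg Fin.val hc
    rwa [toFin_val hx, toFin_val hy] at this
  · rw [toFin_val hx, toFin_val hy]; exact hr

-- relation helper lemmas
lemma rel_v_a (j ℓ : ℕ) : relAll j ℓ (absSpineLen j ℓ) (aJ1 ℓ 1) :=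
  Or.inl (Or.inl ⟨rfl, Or.inl rfl⟩)
lemma rel_v_b (j ℓ : ℕ) : relAll j ℓ (absSpineLen j ℓ) (bJ2 ℓ 1) :=
  Or.inl (Or.inl ⟨rfl, Or.inr rfl⟩)
lemma rel_j1 (j ℓ i : ℕ) (h1 : 1 ≤ i) (h2 : i ≤ j - 2) :
    relAll j ℓ (aJ2 ℓ i) (bJ2 ℓ (i + 1)) :=
  Or.inl (Or.inr (Or.inl ⟨i, h1, h2, Or.inl ⟨rfl, rfl⟩⟩))
lemma rel_j2 (j ℓ i : ℕ) (h1 : 1 ≤ i) (h2 : i ≤ j - 2) :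
    relAll j ℓ (bJ1 ℓ i) (aJ1 ℓ (i + 1)) :=
  Or.inl (Or.inr (Or.inl ⟨i, h1, h2, Or.inr ⟨rfl, rfl⟩⟩))
lemma rel_s1 (j ℓ : ℕ) : relAll j ℓ (aJ2 ℓ j) (bJ2 ℓ j) :=
  Or.inl (Or.inr (Or.inr (Or.inl ⟨rfl, rfl⟩)))
lemma rel_s2 (j ℓ : ℕ) : relAll j ℓ (aJ2 ℓ (j - 1)) (aJ1 ℓ j) :=
  Or.inl (Or.inr (Or.inr (Or.inr (Or.inl ⟨rfl, rfl⟩))))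
lemma rel_s3 (j ℓ : ℕ) : relAll j ℓ (bJ1 ℓ (j - 1)) (bJ1 ℓ j) :=
  Or.inl (Or.inr (Or.inr (Or.inr (Or.inr ⟨rfl, rfl⟩))))
lemma rel_pair_a (j ℓ i : ℕ) (h1 : 1 ≤ i) (h2 : i ≤ j) :
    relAll j ℓ (aJ1 ℓ i) (aJ2 ℓ i) := Or.inr ⟨i, h1, h2, Or.inl ⟨rfl, rfl⟩⟩
lemma rel_pair_b (j ℓ i : ℕ) (h1 : 1 ≤ i) (h2 : i ≤ j) :
    relAll j ℓ (bJ1 ℓ i) (bJ2 ℓ i) := Or.inr ⟨i, h1, h2, Or.inr ⟨rfl, rfl⟩⟩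

-- Rfull builders
lemma mkRfull {j ℓ : ℕ} {x y i i' o o' : ℕ} (hx : x = pos ℓ i o) (hy : y = pos ℓ i' o')
    (hi : 1 ≤ i) (hij : i ≤ j) (hi' : 1 ≤ i') (hij' : i' ≤ j)
    (ho : o < 2 * ℓ + 4) (ho' : o' < 2 * ℓ + 4) (hne : ¬(i = i' ∧ o = o'))
    (hr : relAll j ℓ x y ∨ relAll j ℓ y x) : Rfull j ℓ x y := by
  subst hx; subst hy
  exact ⟨pos_ne hi hi' ho ho' hne, (pos_lt hi hij ho).le, (pos_lt hi' hij' ho').le, hr⟩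

lemma mkRfullSL {j ℓ : ℕ} {y i' o' : ℕ} (hy : y = pos ℓ i' o')
    (hi' : 1 ≤ i') (hij' : i' ≤ j) (ho' : o' < 2 * ℓ + 4)
    (hr : relAll j ℓ (absSpineLen j ℓ) y ∨ relAll j ℓ y (absSpineLen j ℓ)) :
    Rfull j ℓ (absSpineLen j ℓ) y := by
  subst hy
  exact ⟨(pos_lt hi' hij' ho').ne', le_rfl, (pos_lt hi' hij' ho').le, hr⟩

lemma mkRfullSR {j ℓ : ℕ} {x i o : ℕ} (hx : x = pos ℓ i o)
    (hi : 1 ≤ i) (hij : i ≤ j) (ho : o < 2 * ℓ + 4)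
    (hr : relAll j ℓ x (absSpineLen j ℓ) ∨ relAll j ℓ (absSpineLen j ℓ) x) :
    Rfull j ℓ x (absSpineLen j ℓ) := by
  subst hx
  exact ⟨(pos_lt hi hij ho).ne, (pos_lt hi hij ho).le, le_rfl, hr⟩

lemma upEntry_zero (j ℓ : ℕ) : upEntry j ℓ 0 = absSpineLen j ℓ := rfl
lemma upExit_zero (j ℓ : ℕ) : upExit j ℓ 0 = absSpineLen j ℓ := rfl
lemma dnEntry_zero (j ℓ : ℕ) : dnEntry j ℓ 0 = absSpineLen j ℓ := rfl
lemma dnExit_zero (j ℓ : ℕ) : dnExit j ℓ 0 = absSpineLen j ℓ := rfl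
lemma upEntry_odd {j ℓ i : ℕ} (h0 : ¬ i = 0) (hp : i % 2 = 1) : upEntry j ℓ i = aJ1 ℓ i := by
  rw [upEntry, if_neg h0, if_pos hp]
lemma upEntry_even {j ℓ i : ℕ} (h0 : ¬ i = 0) (hp : ¬ i % 2 = 1) : upEntry j ℓ i = bJ2 ℓ i := by
  rw [upEntry, if_neg h0, if_neg hp]
lemma upExit_odd {j ℓ i : ℕ} (h0 : ¬ i = 0) (hp : i % 2 = 1) : upExit j ℓ i = aJ2 ℓ i := by
  rw [upExit, if_neg h0, if_pos hp]
lemma upExit_even {j ℓ i : ℕ} (h0 : ¬ i = 0) (hp : ¬ i % 2 = 1) : upExit j ℓ i = bJ1 ℓ i := by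
  rw [upExit, if_neg h0, if_neg hp]
lemma dnEntry_odd {j ℓ i : ℕ} (h0 : ¬ i = 0) (hp : i % 2 = 1) : dnEntry j ℓ i = bJ1 ℓ i := by
  rw [dnEntry, if_neg h0, if_pos hp]
lemma dnEntry_even {j ℓ i : ℕ} (h0 : ¬ i = 0) (hp : ¬ i % 2 = 1) : dnEntry j ℓ i = aJ2 ℓ i := by
  rw [dnEntry, if_neg h0, if_neg hp]
lemma dnExit_odd {j ℓ i : ℕ} (h0 : ¬ i = 0) (hp : i % 2 = 1) : dnExit j ℓ i = bJ2 ℓ i := by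
  rw [dnExit, if_neg h0, if_pos hp]
lemma dnExit_even {j ℓ i : ℕ} (h0 : ¬ i = 0) (hp : ¬ i % 2 = 1) : dnExit j ℓ i = aJ1 ℓ i := by
  rw [dnExit, if_neg h0, if_neg hp]


open RandomGraphs

lemma mem_seg {j ℓ : ℕ} (hj : 3 ≤ j) : ∀ c, c ≤ j - 1 → ∀ x,
    (x ∈ seg j ℓ c ↔ ∃ i, j - 1 - c < i ∧ i ≤ j ∧
      (x = aJ1 ℓ i ∨ x = aJ2 ℓ i ∨ x = bJ1 ℓ i ∨ x = bJ2 ℓ i))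
  | 0, hc, x => by
    rw [seg]
    constructor
    · intro hx
      refine ⟨j, by omega, le_rfl, ?_⟩
      split at hx <;>
        simp only [List.mem_cons, List.not_mem_nil, or_false] at hx <;> tauto
    · rintro ⟨i, h1, h2, h3⟩
      have hij : i = j := by omega
      subst hij
      split <;> simp only [List.mem_cons, List.not_mem_nil, or_false] <;> tauto
  | c + 1, hc, x => by
    have h1 : 1 ≤ j - 1 - c := by omega
    have ih := mem_seg (ℓ := ℓ) hj c (by omega)
    rw [seg]
    simp only [List.mem_cons, List.mem_append, ih x, List.not_mem_nil, or_false]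
    constructor
    · rintro (h | h | ⟨i, hi1, hi2, hi3⟩ | h | h)
      · refine ⟨j - 1 - c, by omega, by omega, ?_⟩
        rw [upEntry, if_neg (by omega)] at h
        split at h <;> tauto
      · refine ⟨j - 1 - c, by omega, by omega, ?_⟩
        rw [upExit, if_neg (by omega)] at h
        split at h <;> tauto
      · exact ⟨i, by omega, hi2, hi3⟩
      · refine ⟨j - 1 - c, by omega, by omega, ?_⟩
        rw [dnEntry, if_neg (by omega)] at h
        split at h <;> tauto
      · refine ⟨j - 1 - c, by omega, by omega, ?_⟩
        rw [dnExit, if_neg (by omega)] at h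
        split at h <;> tauto
    · rintro ⟨i, hi1, hi2, hi3⟩
      by_cases hie : i = j - 1 - c
      · subst hie
        by_cases hp : (j - 1 - c) % 2 = 1
        · rw [upEntry_odd (by omega) hp, upExit_odd (by omega) hp,
            dnEntry_odd (by omega) hp, dnExit_odd (by omega) hp]
          tauto
        · rw [upEntry_even (by omega) hp, upExit_even (by omega) hp,
            dnEntry_even (by omega) hp, dnExit_even (by omega) hp]
          tauto
      · exact Or.inr (Or.inr (Or.inl ⟨i, by omega, hi2, hi3⟩))

lemma seg_lt {j ℓ : ℕ} (hj : 3 ≤ j) {c : ℕ} (hc : c ≤ j - 1) {x : ℕ}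
    (hx : x ∈ seg j ℓ c) : x < absSpineLen j ℓ := by
  obtain ⟨i, h1, h2, h3⟩ := (mem_seg hj c hc x).1 hx
  rcases h3 with rfl | rfl | rfl | rfl
  · rw [aJ1_pos]; exact pos_lt (by omega) h2 (by omega)
  · rw [aJ2_pos]; exact pos_lt (by omega) h2 (by omega)
  · rw [bJ1_pos]; exact pos_lt (by omega) h2 (by omega)
  · rw [bJ2_pos]; exact pos_lt (by omega) h2 (by omega)

lemma nodup_seg {j ℓ : ℕ} (hj : 3 ≤ j) : ∀ c, c ≤ j - 1 → (seg j ℓ c).Nodup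
  | 0, hc => by
    rw [seg]
    split <;>
    · simp only [List.nodup_cons, List.mem_cons, List.not_mem_nil, or_false, not_or,
        List.nodup_nil, and_true, List.mem_singleton]
      simp only [aJ1_pos, aJ2_pos, bJ1_pos, bJ2_pos]
      refine ⟨⟨?_, ?_, ?_⟩, ⟨?_, ?_⟩, ?_, not_false⟩ <;> (apply pos_ne <;> omega)
  | c + 1, hc => by
    have ih := nodup_seg (ℓ := ℓ) hj c (by omega)
    have hmem := fun x => (mem_seg (ℓ := ℓ) hj c (by omega : c ≤ j - 1) x).1
    rw [seg]
    have key : ∀ x ∈ seg j ℓ c, ∀ i' o', 1 ≤ i' → o' < 2 * ℓ + 4 → i' ≤ j - 1 - c →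
        x ≠ pos ℓ i' o' := by
      intro x hx i' o' h1' h2' h3'
      obtain ⟨i, hi1, hi2, hforms⟩ := hmem x hx
      rcases hforms with rfl | rfl | rfl | rfl <;>
        simp only [aJ1_pos, aJ2_pos, bJ1_pos, bJ2_pos] <;>
        (apply pos_ne <;> omega)
    have h0 : ¬ (j - 1 - c = 0) := by omega
    have main : ∀ o1 o2 o3 o4 : ℕ, o1 < 2*ℓ+4 → o2 < 2*ℓ+4 → o3 < 2*ℓ+4 → o4 < 2*ℓ+4 →
        o1 ≠ o2 → o1 ≠ o3 → o1 ≠ o4 → o2 ≠ o3 → o2 ≠ o4 → o3 ≠ o4 →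
        (pos ℓ (j-1-c) o1 :: pos ℓ (j-1-c) o2 ::
          (seg j ℓ c ++ [pos ℓ (j-1-c) o3, pos ℓ (j-1-c) o4])).Nodup := by
      intro o1 o2 o3 o4 b1 b2 b3 b4 n12 n13 n14 n23 n24 n34
      rw [List.nodup_cons, List.nodup_cons, List.nodup_append]
      simp only [List.mem_cons, List.mem_append, List.not_mem_nil, or_false, not_or,
        List.nodup_cons, List.not_mem_nil, List.nodup_nil, not_false_iff, and_true,
        List.mem_singleton]
      refine ⟨⟨?_, ?_, ?_⟩, ⟨?_, ?_, ?_⟩, ih, ?_, ?_⟩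
      · apply pos_ne <;> omega
      · intro hx; exact key _ hx _ _ (by omega) b1 le_rfl rfl
      · constructor <;> (apply pos_ne <;> omega)
      · intro hx; exact key _ hx _ _ (by omega) b2 le_rfl rfl
      · apply pos_ne <;> omega
      · apply pos_ne <;> omega
      · apply pos_ne <;> omega
      · intro x hx y hmem2
        rcases hmem2 with rfl | rfl
        · exact key _ hx _ _ (by omega) b3 le_rfl
        · exact key _ hx _ _ (by omega) b4 le_rfl
    by_cases hp : (j - 1 - c) % 2 = 1
    · rw [upEntry_odd h0 hp, upExit_odd h0 hp, dnEntry_odd h0 hp, dnExit_odd h0 hp]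
      simp only [aJ1_pos, aJ2_pos, bJ1_pos, bJ2_pos]
      exact main ℓ (ℓ+1) (2*ℓ+2) (2*ℓ+3) (by omega) (by omega) (by omega) (by omega)
        (by omega) (by omega) (by omega) (by omega) (by omega) (by omega)
    · rw [upEntry_even h0 hp, upExit_even h0 hp, dnEntry_even h0 hp, dnExit_even h0 hp]
      simp only [aJ1_pos, aJ2_pos, bJ1_pos, bJ2_pos]
      exact main (2*ℓ+3) (2*ℓ+2) (ℓ+1) ℓ (by omega) (by omega) (by omega) (by omega)
        (by omega) (by omega) (by omega) (by omega) (by omega) (by omega)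


open RandomGraphs

lemma chain_seg {j ℓ : ℕ} (hj : 3 ≤ j) : ∀ c, c ≤ j - 1 →
    List.Chain (Rfull j ℓ) (upExit j ℓ (j - 1 - c)) (seg j ℓ c ++ [dnEntry j ℓ (j - 1 - c)])
  | 0, hc => by
    rw [seg, Nat.sub_zero]
    have h0 : ¬ (j - 1 = 0) := by omega
    by_cases hp : j % 2 = 1
    · have hp' : ¬ ((j - 1) % 2 = 1) := by omega
      rw [if_pos hp, upExit_even h0 hp', dnEntry_even h0 hp']
      simp only [List.cons_append, List.nil_append]
      refine List.Chain.cons ?_ (List.Chain.cons ?_ (List.Chain.cons ?_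
        (List.Chain.cons ?_ (List.Chain.cons ?_ List.Chain.nil))))
      · exact mkRfull (bJ1_pos ℓ (j-1)) (bJ1_pos ℓ j) (by omega) (by omega) (by omega)
          (by omega) (by omega) (by omega) (by omega) (Or.inl (rel_s3 j ℓ))
      · exact mkRfull (bJ1_pos ℓ j) (bJ2_pos ℓ j) (by omega) (by omega) (by omega)
          (by omega) (by omega) (by omega) (by omega)
          (Or.inl (rel_pair_b j ℓ j (by omega) le_rfl))
      · exact mkRfull (bJ2_pos ℓ j) (aJ2_pos ℓ j) (by omega) (by omega) (by omega)
          (by omega) (by omega) (by omega) (by omega) (Or.inr (rel_s1 j ℓ))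
      · exact mkRfull (aJ2_pos ℓ j) (aJ1_pos ℓ j) (by omega) (by omega) (by omega)
          (by omega) (by omega) (by omega) (by omega)
          (Or.inr (rel_pair_a j ℓ j (by omega) le_rfl))
      · exact mkRfull (aJ1_pos ℓ j) (aJ2_pos ℓ (j-1)) (by omega) (by omega) (by omega)
          (by omega) (by omega) (by omega) (by omega) (Or.inr (rel_s2 j ℓ))
    · have hp' : (j - 1) % 2 = 1 := by omega
      rw [if_neg hp, upExit_odd h0 hp', dnEntry_odd h0 hp']
      simp only [List.cons_append, List.nil_append]
      refine List.Chain.cons ?_ (List.Chain.cons ?_ (List.Chain.cons ?_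
        (List.Chain.cons ?_ (List.Chain.cons ?_ List.Chain.nil))))
      · exact mkRfull (aJ2_pos ℓ (j-1)) (aJ1_pos ℓ j) (by omega) (by omega) (by omega)
          (by omega) (by omega) (by omega) (by omega) (Or.inl (rel_s2 j ℓ))
      · exact mkRfull (aJ1_pos ℓ j) (aJ2_pos ℓ j) (by omega) (by omega) (by omega)
          (by omega) (by omega) (by omega) (by omega)
          (Or.inl (rel_pair_a j ℓ j (by omega) le_rfl))
      · exact mkRfull (aJ2_pos ℓ j) (bJ2_pos ℓ j) (by omega) (by omega) (by omega)
          (by omega) (by omega) (by omega) (by omega) (Or.inl (rel_s1 j ℓ))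
      · exact mkRfull (bJ2_pos ℓ j) (bJ1_pos ℓ j) (by omega) (by omega) (by omega)
          (by omega) (by omega) (by omega) (by omega)
          (Or.inr (rel_pair_b j ℓ j (by omega) le_rfl))
      · exact mkRfull (bJ1_pos ℓ j) (bJ1_pos ℓ (j-1)) (by omega) (by omega) (by omega)
          (by omega) (by omega) (by omega) (by omega) (Or.inr (rel_s3 j ℓ))
  | c + 1, hc => by
    have ih := chain_seg (ℓ := ℓ) hj c (by omega)
    rw [seg]
    have hidx : j - 1 - (c + 1) = (j - 1 - c) - 1 := by omega
    rw [hidx]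
    have h1 : 1 ≤ j - 1 - c := by omega
    have h1j : j - 1 - c ≤ j - 1 := by omega
    simp only [List.cons_append, List.append_assoc, List.nil_append]
    refine List.Chain.cons ?_ (List.Chain.cons ?_ ?_)
    · -- Rfull (upExit (i₁-1)) (upEntry i₁)
      by_cases hz : j - 1 - c = 1
      · rw [hz]
        rw [show (1:ℕ) - 1 = 0 from rfl, upExit_zero, upEntry_odd (by omega) (by norm_num)]
        exact mkRfullSL (aJ1_pos ℓ 1) (by omega) (by omega) (by omega)
          (Or.inl (rel_v_a j ℓ))
      · by_cases hp : (j - 1 - c - 1) % 2 = 1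
        · have hp2 : ¬ ((j - 1 - c) % 2 = 1) := by omega
          rw [upExit_odd (by omega) hp, upEntry_even (by omega) hp2]
          refine mkRfull (aJ2_pos ℓ _) (bJ2_pos ℓ _) (by omega) (by omega) (by omega)
            (by omega) (by omega) (by omega) (by omega) ?_
          have h := rel_j1 j ℓ (j - 1 - c - 1) (by omega) (by omega)
          rw [show j - 1 - c - 1 + 1 = j - 1 - c by omega] at h
          exact Or.inl h
        · have hp2 : (j - 1 - c) % 2 = 1 := by omega
          rw [upExit_even (by omega) hp, upEntry_odd (by omega) hp2]
          refine mkRfull (bJ1_pos ℓ _) (aJ1_pos ℓ _) (by omega) (by omega) (by omega)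
            (by omega) (by omega) (by omega) (by omega) ?_
          have h := rel_j2 j ℓ (j - 1 - c - 1) (by omega) (by omega)
          rw [show j - 1 - c - 1 + 1 = j - 1 - c by omega] at h
          exact Or.inl h
    · -- Rfull (upEntry i₁) (upExit i₁)
      by_cases hp : (j - 1 - c) % 2 = 1
      · rw [upEntry_odd (by omega) hp, upExit_odd (by omega) hp]
        exact mkRfull (aJ1_pos ℓ _) (aJ2_pos ℓ _) (by omega) (by omega) (by omega)
          (by omega) (by omega) (by omega) (by omega)
          (Or.inl (rel_pair_a j ℓ _ (by omega) (by omega)))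
      · rw [upEntry_even (by omega) hp, upExit_even (by omega) hp]
        exact mkRfull (bJ2_pos ℓ _) (bJ1_pos ℓ _) (by omega) (by omega) (by omega)
          (by omega) (by omega) (by omega) (by omega)
          (Or.inr (rel_pair_b j ℓ _ (by omega) (by omega)))
    · -- Chain from upExit i₁ over seg c ++ [dnEntry i₁, dnExit i₁, dnEntry (i₁-1)]
      simp only [List.Chain]
      rw [List.isChain_cons_split]
      refine ⟨ih, List.Chain.cons ?_ (List.Chain.cons ?_ List.Chain.nil)⟩
      · -- Rfull (dnEntry i₁) (dnExit i₁)
        by_cases hp : (j - 1 - c) % 2 = 1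
        · rw [dnEntry_odd (by omega) hp, dnExit_odd (by omega) hp]
          exact mkRfull (bJ1_pos ℓ _) (bJ2_pos ℓ _) (by omega) (by omega) (by omega)
            (by omega) (by omega) (by omega) (by omega)
            (Or.inl (rel_pair_b j ℓ _ (by omega) (by omega)))
        · rw [dnEntry_even (by omega) hp, dnExit_even (by omega) hp]
          exact mkRfull (aJ2_pos ℓ _) (aJ1_pos ℓ _) (by omega) (by omega) (by omega)
            (by omega) (by omega) (by omega) (by omega)
            (Or.inr (rel_pair_a j ℓ _ (by omega) (by omega)))
      · -- Rfull (dnExit i₁) (dnEntry (i₁-1))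
        by_cases hz : j - 1 - c = 1
        · rw [hz]
          rw [show (1:ℕ) - 1 = 0 from rfl, dnEntry_zero, dnExit_odd (by omega) (by norm_num)]
          exact mkRfullSR (bJ2_pos ℓ 1) (by omega) (by omega) (by omega)
            (Or.inr (rel_v_b j ℓ))
        · by_cases hp : (j - 1 - c - 1) % 2 = 1
          · have hp2 : ¬ ((j - 1 - c) % 2 = 1) := by omega
            rw [dnExit_even (by omega) hp2, dnEntry_odd (by omega) hp]
            refine mkRfull (aJ1_pos ℓ _) (bJ1_pos ℓ _) (by omega) (by omega) (by omega)
              (by omega) (by omega) (by omega) (by omega) ?_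
            have h := rel_j2 j ℓ (j - 1 - c - 1) (by omega) (by omega)
            rw [show j - 1 - c - 1 + 1 = j - 1 - c by omega] at h
            exact Or.inr h
          · have hp2 : (j - 1 - c) % 2 = 1 := by omega
            rw [dnExit_odd (by omega) hp2, dnEntry_even (by omega) hp]
            refine mkRfull (bJ2_pos ℓ _) (aJ2_pos ℓ _) (by omega) (by omega) (by omega)
              (by omega) (by omega) (by omega) (by omega) ?_
            have h := rel_j1 j ℓ (j - 1 - c - 1) (by omega) (by omega)
            rw [show j - 1 - c - 1 + 1 = j - 1 - c by omega] at h
            exact Or.inr h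


open RandomGraphs

def EdgeSpec (j ℓ lo : ℕ) (e : Sym2 ℕ) : Prop :=
  (∃ i, lo < i ∧ i ≤ j ∧ (e = s(aJ1 ℓ i, aJ2 ℓ i) ∨ e = s(bJ1 ℓ i, bJ2 ℓ i))) ∨
  (∃ m, lo ≤ m ∧ m ≤ j - 2 ∧
    (e = s(upExit j ℓ m, upEntry j ℓ (m + 1)) ∨ e = s(dnExit j ℓ (m + 1), dnEntry j ℓ m))) ∨
  e = s(aJ2 ℓ j, bJ2 ℓ j) ∨ e = s(aJ2 ℓ (j - 1), aJ1 ℓ j) ∨ e = s(bJ1 ℓ (j - 1), bJ1 ℓ j)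

lemma sEdges_seg {j ℓ : ℕ} (hj : 3 ≤ j) : ∀ c, c ≤ j - 1 → ∀ e,
    (e ∈ sEdges (upExit j ℓ (j - 1 - c) :: (seg j ℓ c ++ [dnEntry j ℓ (j - 1 - c)])) ↔
      EdgeSpec j ℓ (j - 1 - c) e)
  | 0, hc, e => by
    rw [seg, Nat.sub_zero]
    have h0 : ¬ (j - 1 = 0) := by omega
    unfold EdgeSpec
    by_cases hp : j % 2 = 1
    · have hp' : ¬ ((j - 1) % 2 = 1) := by omega
      rw [if_pos hp, upExit_even h0 hp', dnEntry_even h0 hp']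
      simp only [List.cons_append, List.nil_append, sEdges_cons_cons, sEdges_single,
        List.mem_cons, List.not_mem_nil, or_false]
      constructor
      · rintro (rfl | rfl | rfl | rfl | rfl)
        · exact Or.inr (Or.inr (Or.inr (Or.inr rfl)))
        · exact Or.inl ⟨j, by omega, le_rfl, Or.inr rfl⟩
        · exact Or.inr (Or.inr (Or.inl Sym2.eq_swap))
        · exact Or.inl ⟨j, by omega, le_rfl, Or.inl Sym2.eq_swap⟩
        · exact Or.inr (Or.inr (Or.inr (Or.inl Sym2.eq_swap)))
      · rintro (⟨i, hi1, hi2, h | h⟩ | ⟨m, hm1, hm2, h⟩ | h | h | h)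
        · have : i = j := by omega
          subst this
          exact Or.inr (Or.inr (Or.inr (Or.inl (h.trans Sym2.eq_swap))))
        · have : i = j := by omega
          subst this
          exact Or.inr (Or.inl h)
        · omega
        · exact Or.inr (Or.inr (Or.inl (h.trans Sym2.eq_swap)))
        · exact Or.inr (Or.inr (Or.inr (Or.inr (h.trans Sym2.eq_swap))))
        · exact Or.inl h
    · have hp' : (j - 1) % 2 = 1 := by omega
      rw [if_neg hp, upExit_odd h0 hp', dnEntry_odd h0 hp']
      simp only [List.cons_append, List.nil_append, sEdges_cons_cons, sEdges_single,
        List.mem_cons, List.not_mem_nil, or_false]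
      constructor
      · rintro (rfl | rfl | rfl | rfl | rfl)
        · exact Or.inr (Or.inr (Or.inr (Or.inl rfl)))
        · exact Or.inl ⟨j, by omega, le_rfl, Or.inl rfl⟩
        · exact Or.inr (Or.inr (Or.inl rfl))
        · exact Or.inl ⟨j, by omega, le_rfl, Or.inr Sym2.eq_swap⟩
        · exact Or.inr (Or.inr (Or.inr (Or.inr Sym2.eq_swap)))
      · rintro (⟨i, hi1, hi2, h | h⟩ | ⟨m, hm1, hm2, h⟩ | h | h | h)
        · have : i = j := by omega
          subst this
          exact Or.inr (Or.inl h)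
        · have : i = j := by omega
          subst this
          exact Or.inr (Or.inr (Or.inr (Or.inl (h.trans Sym2.eq_swap))))
        · omega
        · exact Or.inr (Or.inr (Or.inl h))
        · exact Or.inl h
        · exact Or.inr (Or.inr (Or.inr (Or.inr (h.trans Sym2.eq_swap))))
  | c + 1, hc, e => by
    have ih := sEdges_seg (ℓ := ℓ) hj c (by omega) e
    rw [seg]
    have hidx : j - 1 - (c + 1) = j - 1 - c - 1 := by omega
    rw [hidx]
    have h1 : 1 ≤ j - 1 - c := by omega
    have h1j : j - 1 - c ≤ j - 1 := by omega
    simp only [List.cons_append, List.append_assoc, List.nil_append, sEdges_cons_cons]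
    rw [sEdges_append (seg j ℓ c) (upExit j ℓ (j - 1 - c)) (dnEntry j ℓ (j - 1 - c))
      [dnExit j ℓ (j - 1 - c), dnEntry j ℓ (j - 1 - c - 1)]]
    simp only [sEdges_cons_cons, sEdges_single, List.mem_cons, List.mem_append,
      List.not_mem_nil, or_false]
    rw [ih]
    constructor
    · rintro (h | h | h | h | h)
      · -- e = s(upExit (i₁-1), upEntry i₁) : conn at m = i₁ - 1
        refine Or.inr (Or.inl ⟨j - 1 - c - 1, le_rfl, by omega, Or.inl ?_⟩)
        rwa [show j - 1 - c - 1 + 1 = j - 1 - c by omega]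
      · -- e = s(upEntry i₁, upExit i₁) : pair i₁
        by_cases hp : (j - 1 - c) % 2 = 1
        · rw [upEntry_odd (by omega) hp, upExit_odd (by omega) hp] at h
          exact Or.inl ⟨j - 1 - c, by omega, by omega, Or.inl h⟩
        · rw [upEntry_even (by omega) hp, upExit_even (by omega) hp] at h
          exact Or.inl ⟨j - 1 - c, by omega, by omega, Or.inr (h.trans Sym2.eq_swap)⟩
      · -- EdgeSpec (i₁) e : widen
        rcases h with ⟨i, hi1, hi2, h⟩ | ⟨m, hm1, hm2, h⟩ | h
        · exact Or.inl ⟨i, by omega, hi2, h⟩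
        · exact Or.inr (Or.inl ⟨m, by omega, hm2, h⟩)
        · exact Or.inr (Or.inr h)
      · -- e = s(dnEntry i₁, dnExit i₁) : pair i₁
        by_cases hp : (j - 1 - c) % 2 = 1
        · rw [dnEntry_odd (by omega) hp, dnExit_odd (by omega) hp] at h
          exact Or.inl ⟨j - 1 - c, by omega, by omega, Or.inr h⟩
        · rw [dnEntry_even (by omega) hp, dnExit_even (by omega) hp] at h
          exact Or.inl ⟨j - 1 - c, by omega, by omega, Or.inl (h.trans Sym2.eq_swap)⟩
      · -- e = s(dnExit i₁, dnEntry (i₁-1)) : conn at m = i₁ - 1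
        refine Or.inr (Or.inl ⟨j - 1 - c - 1, le_rfl, by omega, Or.inr ?_⟩)
        rwa [show j - 1 - c - 1 + 1 = j - 1 - c by omega]
    · rintro (⟨i, hi1, hi2, h | h⟩ | ⟨m, hm1, hm2, h⟩ | h)
      · by_cases hie : i = j - 1 - c
        · subst hie
          by_cases hp : (j - 1 - c) % 2 = 1
          · rw [← upEntry_odd (j := j) (by omega) hp, ← upExit_odd (j := j) (by omega) hp] at h
            exact Or.inr (Or.inl h)
          · rw [← dnExit_even (j := j) (by omega) hp, ← dnEntry_even (j := j) (by omega) hp] at h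
            exact Or.inr (Or.inr (Or.inr (Or.inl (h.trans Sym2.eq_swap))))
        · exact Or.inr (Or.inr (Or.inl (Or.inl ⟨i, by omega, hi2, Or.inl h⟩)))
      · by_cases hie : i = j - 1 - c
        · subst hie
          by_cases hp : (j - 1 - c) % 2 = 1
          · rw [← dnEntry_odd (j := j) (by omega) hp, ← dnExit_odd (j := j) (by omega) hp] at h
            exact Or.inr (Or.inr (Or.inr (Or.inl h)))
          · rw [← upExit_even (j := j) (by omega) hp, ← upEntry_even (j := j) (by omega) hp] at h
            exact Or.inr (Or.inl (h.trans Sym2.eq_swap))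
        · exact Or.inr (Or.inr (Or.inl (Or.inl ⟨i, by omega, hi2, Or.inr h⟩)))
      · by_cases hme : m = j - 1 - c - 1
        · subst hme
          rw [show j - 1 - c - 1 + 1 = j - 1 - c by omega] at h
          rcases h with h | h
          · exact Or.inl h
          · exact Or.inr (Or.inr (Or.inr (Or.inr h)))
        · exact Or.inr (Or.inr (Or.inl (Or.inr (Or.inl ⟨m, by omega, hm2, h⟩))))
      · exact Or.inr (Or.inr (Or.inl (Or.inr (Or.inr h))))


open RandomGraphs

def posSet (j ℓ z : ℕ) : Prop :=
  z = absSpineLen j ℓ ∨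
  ∃ i, 1 ≤ i ∧ i ≤ j ∧ (z = aJ1 ℓ i ∨ z = aJ2 ℓ i ∨ z = bJ1 ℓ i ∨ z = bJ2 ℓ i)

lemma posSet_le {j ℓ z : ℕ} (h : posSet j ℓ z) : z ≤ absSpineLen j ℓ := by
  rcases h with rfl | ⟨i, h1, h2, h3⟩
  · exact le_rfl
  · rcases h3 with rfl | rfl | rfl | rfl
    · rw [aJ1_pos]; exact (pos_lt h1 h2 (by omega)).le
    · rw [aJ2_pos]; exact (pos_lt h1 h2 (by omega)).le
    · rw [bJ1_pos]; exact (pos_lt h1 h2 (by omega)).le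
    · rw [bJ2_pos]; exact (pos_lt h1 h2 (by omega)).le

lemma posSet_of_relAll {j ℓ x y : ℕ} (hj : 3 ≤ j) (h : relAll j ℓ x y) :
    posSet j ℓ x ∧ posSet j ℓ y := by
  rcases h with h | ⟨i, h1, h2, ⟨rfl, rfl⟩ | ⟨rfl, rfl⟩⟩
  · rcases h with ⟨rfl, rfl | rfl⟩ | ⟨i, h1, h2, ⟨rfl, rfl⟩ | ⟨rfl, rfl⟩⟩ | ⟨rfl, rfl⟩ |
      ⟨rfl, rfl⟩ | ⟨rfl, rfl⟩
    · exact ⟨Or.inl rfl, Or.inr ⟨1, by omega, by omega, by tauto⟩⟩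
    · exact ⟨Or.inl rfl, Or.inr ⟨1, by omega, by omega, by tauto⟩⟩
    · exact ⟨Or.inr ⟨i, by omega, by omega, by tauto⟩,
        Or.inr ⟨i + 1, by omega, by omega, by tauto⟩⟩
    · exact ⟨Or.inr ⟨i, by omega, by omega, by tauto⟩,
        Or.inr ⟨i + 1, by omega, by omega, by tauto⟩⟩
    · exact ⟨Or.inr ⟨j, by omega, by omega, by tauto⟩,
        Or.inr ⟨j, by omega, by omega, by tauto⟩⟩
    · exact ⟨Or.inr ⟨j - 1, by omega, by omega, by tauto⟩,
        Or.inr ⟨j, by omega, by omega, by tauto⟩⟩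
    · exact ⟨Or.inr ⟨j - 1, by omega, by omega, by tauto⟩,
        Or.inr ⟨j, by omega, by omega, by tauto⟩⟩
  · exact ⟨Or.inr ⟨i, h1, h2, by tauto⟩, Or.inr ⟨i, h1, h2, by tauto⟩⟩
  · exact ⟨Or.inr ⟨i, h1, h2, by tauto⟩, Or.inr ⟨i, h1, h2, by tauto⟩⟩

lemma spec_of_relAll {j ℓ x y : ℕ} (hj : 3 ≤ j) (h : relAll j ℓ x y) :
    EdgeSpec j ℓ 0 s(x, y) := by
  rcases h with h | ⟨i, h1, h2, ⟨rfl, rfl⟩ | ⟨rfl, rfl⟩⟩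
  · rcases h with ⟨rfl, rfl | rfl⟩ | ⟨i, h1, h2, ⟨rfl, rfl⟩ | ⟨rfl, rfl⟩⟩ | hs | hs | hs
    · refine Or.inr (Or.inl ⟨0, le_rfl, by omega, Or.inl ?_⟩)
      rw [upExit_zero, show (0:ℕ) + 1 = 1 from rfl,
        upEntry_odd (by norm_num) (by norm_num)]
    · refine Or.inr (Or.inl ⟨0, le_rfl, by omega, Or.inr ?_⟩)
      rw [show (0:ℕ) + 1 = 1 from rfl, dnExit_odd (by norm_num) (by norm_num), dnEntry_zero]
      exact Sym2.eq_swap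
    · -- x = aJ2 i, y = bJ2 (i+1)
      by_cases hp : i % 2 = 1
      · refine Or.inr (Or.inl ⟨i, by omega, h2, Or.inl ?_⟩)
        rw [upExit_odd (by omega) hp, upEntry_even (by omega) (by omega)]
      · refine Or.inr (Or.inl ⟨i, by omega, h2, Or.inr ?_⟩)
        rw [dnExit_odd (by omega) (by omega), dnEntry_even (by omega) hp]
        exact Sym2.eq_swap
    · -- x = bJ1 i, y = aJ1 (i+1)
      by_cases hp : i % 2 = 1
      · refine Or.inr (Or.inl ⟨i, by omega, h2, Or.inr ?_⟩)
        rw [dnExit_even (by omega) (by omega), dnEntry_odd (by omega) hp]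
        exact Sym2.eq_swap
      · refine Or.inr (Or.inl ⟨i, by omega, h2, Or.inl ?_⟩)
        rw [upExit_even (by omega) hp, upEntry_odd (by omega) (by omega)]
    · exact Or.inr (Or.inr (Or.inl (by rw [hs.1, hs.2])))
    · exact Or.inr (Or.inr (Or.inr (Or.inl (by rw [hs.1, hs.2]))))
    · exact Or.inr (Or.inr (Or.inr (Or.inr (by rw [hs.1, hs.2]))))
  · exact Or.inl ⟨i, by omega, h2, Or.inl rfl⟩
  · exact Or.inl ⟨i, by omega, h2, Or.inr rfl⟩


open RandomGraphs

lemma main (j ℓ : ℕ) (hj : 3 ≤ j) :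
    ∃ (v₀ : Fin (absSpineLen j ℓ + 1)) (w : (absJunctionGraph j ℓ).Walk v₀ v₀),
      w.IsCycle ∧
      (∀ e, e ∈ (absJunctionGraph j ℓ).edgeSet ↔ e ∈ w.edges) ∧
      (∀ x, x ∈ (absJunctionGraph j ℓ).support ↔ x ∈ w.support) := by
  classical
  obtain ⟨c0, hc0⟩ : ∃ c0, j - 1 = c0 + 1 := ⟨j - 2, by omega⟩
  have hsub : j - 1 - (j - 1) = 0 := Nat.sub_self _
  have hchainN : List.Chain (Rfull j ℓ) (absSpineLen j ℓ)
      (seg j ℓ (j - 1) ++ [absSpineLen j ℓ]) := by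
    have h := chain_seg (ℓ := ℓ) hj (j - 1) le_rfl
    rwa [hsub, upExit_zero, dnEntry_zero] at h
  have hmemN : ∀ x, x ∈ seg j ℓ (j - 1) ↔ ∃ i, 0 < i ∧ i ≤ j ∧
      (x = aJ1 ℓ i ∨ x = aJ2 ℓ i ∨ x = bJ1 ℓ i ∨ x = bJ2 ℓ i) := by
    intro x
    have h := mem_seg (ℓ := ℓ) hj (j - 1) le_rfl x
    rwa [hsub] at h
  have hltN : ∀ x ∈ seg j ℓ (j - 1), x < absSpineLen j ℓ :=
    fun x hx => seg_lt hj le_rfl hx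
  have hnodupN : (seg j ℓ (j - 1)).Nodup := nodup_seg (ℓ := ℓ) hj (j - 1) le_rfl
  have hedgeN : ∀ e, e ∈ sEdges (absSpineLen j ℓ ::
      (seg j ℓ (j - 1) ++ [absSpineLen j ℓ])) ↔ EdgeSpec j ℓ 0 e := by
    intro e
    have h := sEdges_seg (ℓ := ℓ) hj (j - 1) le_rfl e
    rwa [hsub, upExit_zero, dnEntry_zero] at h
  have hone : j - 1 - c0 = 1 := by omega
  have hdec : seg j ℓ (j - 1) = aJ1 ℓ 1 ::
      (upExit j ℓ 1 :: (seg j ℓ c0 ++ [dnEntry j ℓ 1, dnExit j ℓ 1])) := by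
    rw [hc0, seg, hone, upEntry_odd (by norm_num) (by norm_num)]
  have hba : aJ1 ℓ 1 < absSpineLen j ℓ := by
    rw [aJ1_pos]; exact pos_lt le_rfl (by omega) (by omega)
  have hbb : bJ2 ℓ 1 < absSpineLen j ℓ := by
    rw [bJ2_pos]; exact pos_lt le_rfl (by omega) (by omega)
  have hbound : ∀ x ∈ seg j ℓ (j - 1) ++ [absSpineLen j ℓ], x ≤ absSpineLen j ℓ := by
    intro x hx
    rcases List.mem_append.mp hx with hx | hx
    · exact (hltN x hx).le
    · rw [List.mem_singleton.mp hx]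
  have hinj : ∀ x, x ≤ absSpineLen j ℓ → ∀ y, y ≤ absSpineLen j ℓ →
      toFin j ℓ x = toFin j ℓ y → x = y := by
    intro x hx y hy hxy
    have := congrArg Fin.val hxy
    rwa [toFin_val hx, toFin_val hy] at this
  have hchainF : List.Chain (absJunctionGraph j ℓ).Adj (toFin j ℓ (absSpineLen j ℓ))
      ((seg j ℓ (j - 1) ++ [absSpineLen j ℓ]).map (toFin j ℓ)) := by
    simp only [List.Chain]
    rw [List.isChain_cons_map]
    exact List.IsChain.imp (fun a b h => adj_of_Rfull h) hchainN
  have hmapdec : (seg j ℓ (j - 1) ++ [absSpineLen j ℓ]).map (toFin j ℓ) =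
      toFin j ℓ (aJ1 ℓ 1) ::
        ((upExit j ℓ 1 :: (seg j ℓ c0 ++ [dnEntry j ℓ 1, dnExit j ℓ 1])).map (toFin j ℓ)
          ++ [toFin j ℓ (absSpineLen j ℓ)]) := by
    rw [hdec]; simp
  rw [hmapdec] at hchainF
  simp only [List.Chain] at hchainF
  rw [List.isChain_cons_cons] at hchainF
  obtain ⟨hadj0, hchainP⟩ := hchainF
  have hpedges := mkWalk_edges (absJunctionGraph j ℓ) (toFin j ℓ (aJ1 ℓ 1))
    ((upExit j ℓ 1 :: (seg j ℓ c0 ++ [dnEntry j ℓ 1, dnExit j ℓ 1])).map (toFin j ℓ))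
    (toFin j ℓ (absSpineLen j ℓ)) hchainP
  have hpsupp := mkWalk_support (absJunctionGraph j ℓ) (toFin j ℓ (aJ1 ℓ 1))
    ((upExit j ℓ 1 :: (seg j ℓ c0 ++ [dnEntry j ℓ 1, dnExit j ℓ 1])).map (toFin j ℓ))
    (toFin j ℓ (absSpineLen j ℓ)) hchainP
  have hmapfull : (absSpineLen j ℓ :: (seg j ℓ (j - 1) ++ [absSpineLen j ℓ])).map (toFin j ℓ)
      = toFin j ℓ (absSpineLen j ℓ) :: (toFin j ℓ (aJ1 ℓ 1) ::
        ((upExit j ℓ 1 :: (seg j ℓ c0 ++ [dnEntry j ℓ 1, dnExit j ℓ 1])).map (toFin j ℓ)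
          ++ [toFin j ℓ (absSpineLen j ℓ)])) := by
    rw [List.map_cons, hmapdec]
  have hedgesF : (SimpleGraph.Walk.cons hadj0 (mkWalk _ _ _ _ hchainP)).edges =
      (sEdges (absSpineLen j ℓ :: (seg j ℓ (j - 1) ++ [absSpineLen j ℓ]))).map
        (Sym2.map (toFin j ℓ)) := by
    rw [SimpleGraph.Walk.edges_cons, hpedges,
      ← sEdges_map (toFin j ℓ) (seg j ℓ (j - 1) ++ [absSpineLen j ℓ]) (absSpineLen j ℓ),
      hmapfull, sEdges_cons_cons]
  have hsuppF : (SimpleGraph.Walk.cons hadj0 (mkWalk _ _ _ _ hchainP)).support =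
      (absSpineLen j ℓ :: (seg j ℓ (j - 1) ++ [absSpineLen j ℓ])).map (toFin j ℓ) := by
    rw [SimpleGraph.Walk.support_cons, hpsupp, hmapfull]
  refine ⟨toFin j ℓ (absSpineLen j ℓ),
    SimpleGraph.Walk.cons hadj0 (mkWalk _ _ _ _ hchainP), ?_, ?_, ?_⟩
  · -- IsCycle
    rw [SimpleGraph.Walk.cons_isCycle_iff]
    constructor
    · rw [SimpleGraph.Walk.isPath_def, hpsupp, ← hmapdec]
      apply List.Nodup.map_on
      · intro x hx y hy hxy
        exact hinj x (hbound x hx) y (hbound y hy) hxy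
      · rw [List.nodup_append]
        refine ⟨hnodupN, List.nodup_singleton _, ?_⟩
        intro a ha b hb
        obtain rfl := List.mem_singleton.mp hb
        exact (hltN _ ha).ne
    · intro hmem
      have hsplit : seg j ℓ (j - 1) ++ [absSpineLen j ℓ] =
          aJ1 ℓ 1 :: ((upExit j ℓ 1 :: (seg j ℓ c0 ++ [dnEntry j ℓ 1, dnExit j ℓ 1]))
            ++ [absSpineLen j ℓ]) := by
        rw [hdec]; simp
      rw [hpedges, ← hmapdec, hsplit, sEdges_map] at hmem
      obtain ⟨e', he'mem, he'eq⟩ := List.mem_map.mp hmem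
      rcases sEdges_last _ _ _ _ he'mem with hA | hB
      · obtain ⟨x, y, rfl, hx, hy⟩ := sEdges_mem _ _ _ hA
        have hxseg : x ∈ seg j ℓ (j - 1) := by rw [hdec]; exact hx
        have hyseg : y ∈ seg j ℓ (j - 1) := by rw [hdec]; exact hy
        rw [Sym2.map_pair_eq, Sym2.eq_iff] at he'eq
        rcases he'eq with ⟨h1, _⟩ | ⟨_, h2⟩
        · exact absurd (hinj x (hltN x hxseg).le _ le_rfl h1)
            (by intro hh; exact lt_irrefl _ (hh ▸ hltN x hxseg))
        · exact absurd (hinj y (hltN y hyseg).le _ le_rfl h2)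
            (by intro hh; exact lt_irrefl _ (hh ▸ hltN y hyseg))
      · have hlast : ((upExit j ℓ 1 :: (seg j ℓ c0 ++ [dnEntry j ℓ 1, dnExit j ℓ 1]))
            : List ℕ).getLastD (aJ1 ℓ 1) = bJ2 ℓ 1 := by
          rw [show (upExit j ℓ 1 :: (seg j ℓ c0 ++ [dnEntry j ℓ 1, dnExit j ℓ 1]) : List ℕ) =
            (upExit j ℓ 1 :: (seg j ℓ c0 ++ [dnEntry j ℓ 1])) ++ [dnExit j ℓ 1] by simp,
            List.getLastD_concat, dnExit_odd (by norm_num) (by norm_num)]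
        rw [hlast] at hB
        rw [hB, Sym2.map_pair_eq, Sym2.eq_iff] at he'eq
        rcases he'eq with ⟨h1, _⟩ | ⟨h1, _⟩
        · have := hinj _ hbb.le _ le_rfl h1
          exact absurd this hbb.ne
        · have := hinj _ hbb.le _ hba.le h1
          rw [bJ2_pos, aJ1_pos] at this
          exact pos_ne le_rfl le_rfl (by omega) (by omega) (by omega) this
  · -- edges
    intro e
    constructor
    · intro he
      have core : ∀ x y : ℕ, relAll j ℓ x y →
          s(toFin j ℓ x, toFin j ℓ y) ∈
            (SimpleGraph.Walk.cons hadj0 (mkWalk _ _ _ _ hchainP)).edges := by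
        intro x y hr
        rw [hedgesF]
        exact List.mem_map.mpr ⟨s(x, y), (hedgeN _).mpr (spec_of_relAll hj hr),
          Sym2.map_pair_eq _ _ _⟩
      revert he
      refine Sym2.ind (fun u v huv => ?_) e
      rw [SimpleGraph.mem_edgeSet, junction_adj_iff] at huv
      obtain ⟨hne, hr | hr⟩ := huv
      · have h := core ↑u ↑v hr
        rwa [toFin_coe, toFin_coe] at h
      · have h := core ↑v ↑u hr
        rw [toFin_coe, toFin_coe] at h
        rwa [Sym2.eq_swap]
    · exact fun he => SimpleGraph.Walk.edges_subset_edgeSet _ he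
  · -- support
    intro x
    rw [SimpleGraph.mem_support]
    constructor
    · rintro ⟨y, hadj'⟩
      have toSupp : posSet j ℓ ↑x →
          x ∈ (SimpleGraph.Walk.cons hadj0 (mkWalk _ _ _ _ hchainP)).support := by
        intro hz
        rw [hsuppF]
        refine List.mem_map.mpr ⟨↑x, ?_, toFin_coe j ℓ x⟩
        rcases hz with hz | ⟨i, h1, h2, h3⟩
        · rw [hz]; simp
        · have hm : (↑x : ℕ) ∈ seg j ℓ (j - 1) := (hmemN _).mpr ⟨i, h1, h2, h3⟩
          simp [hm]
      rw [junction_adj_iff] at hadj'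
      obtain ⟨hne, hr | hr⟩ := hadj'
      · exact toSupp (posSet_of_relAll hj hr).1
      · exact toSupp (posSet_of_relAll hj hr).2
    · intro hx
      rw [hsuppF] at hx
      obtain ⟨z, hzmem, rfl⟩ := List.mem_map.mp hx
      simp only [List.mem_cons, List.mem_append, List.mem_singleton] at hzmem
      have hzcase : z = absSpineLen j ℓ ∨ z ∈ seg j ℓ (j - 1) := by tauto
      rcases hzcase with rfl | hz
      · exact ⟨toFin j ℓ (aJ1 ℓ 1),
          adj_of_Rfull ⟨hba.ne', le_rfl, hba.le, Or.inl (rel_v_a j ℓ)⟩⟩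
      · obtain ⟨i, h1, h2, h3⟩ := (hmemN z).1 hz
        rcases h3 with rfl | rfl | rfl | rfl
        · exact ⟨toFin j ℓ (aJ2 ℓ i), adj_of_Rfull (mkRfull (aJ1_pos ℓ i) (aJ2_pos ℓ i)
            h1 h2 h1 h2 (by omega) (by omega) (by omega)
            (Or.inl (rel_pair_a j ℓ i h1 h2)))⟩
        · exact ⟨toFin j ℓ (aJ1 ℓ i), adj_of_Rfull (mkRfull (aJ2_pos ℓ i) (aJ1_pos ℓ i)
            h1 h2 h1 h2 (by omega) (by omega) (by omega)
            (Or.inr (rel_pair_a j ℓ i h1 h2)))⟩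
        · exact ⟨toFin j ℓ (bJ2 ℓ i), adj_of_Rfull (mkRfull (bJ1_pos ℓ i) (bJ2_pos ℓ i)
            h1 h2 h1 h2 (by omega) (by omega) (by omega)
            (Or.inl (rel_pair_b j ℓ i h1 h2)))⟩
        · exact ⟨toFin j ℓ (bJ1 ℓ i), adj_of_Rfull (mkRfull (bJ2_pos ℓ i) (bJ1_pos ℓ i)
            h1 h2 h1 h2 (by omega) (by omega) (by omega)
            (Or.inr (rel_pair_b j ℓ i h1 h2)))⟩


end AbsCycleAux

/-- Let `k ≥ 2`, `j ≥ 3` and `ℓ ≥ 2k`. The graph consisting of all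
junction edges, of the path `a_{1,1} v b_{1,2}`, and of all the edges `a_{i,1}a_{i,2}`
and `b_{i,1}b_{i,2}` (for all `i = 1,…,j`) is a cycle.  Formally: there is a cycle `w`
in `absJunctionGraph j ℓ` whose edges are exactly the edges of `absJunctionGraph j ℓ`
and whose support is exactly the set of non-isolated vertices of `absJunctionGraph j ℓ`. -/
theorem junction_graph_is_cycle (k j ℓ : ℕ) (hk : 2 ≤ k) (hj : 3 ≤ j) (hℓ : 2 * k ≤ ℓ) :
    ∃ (v₀ : Fin (absSpineLen j ℓ + 1)) (w : (absJunctionGraph j ℓ).Walk v₀ v₀),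
      w.IsCycle ∧
      (∀ e, e ∈ (absJunctionGraph j ℓ).edgeSet ↔ e ∈ w.edges) ∧
      (∀ x, x ∈ (absJunctionGraph j ℓ).support ↔ x ∈ w.support) := by
  exact AbsCycleAux.main j ℓ hj
end
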